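/- arXiv:2011.13770 — 6 statements merged into one kernel-verified Lean document; each statement's English description precedes it below -/
import Mathlib

section
/- Let Ω be a slice-open set in W and let q ∈ Ω. Then there exists a real-connected slice-domain U with q ∈ U ⊆ Ω. -/
noncomputable section
set_option synthInstance.maxHeartbeats 1000000
set_option maxHeartbeats 1000000

/-- `ℝ^{2n}` as a Euclidean space. -/
abbrev V (n : ℕ) : Type := EuclideanSpace ℝ (Fin (2 * n))

/-- `End(ℝ^{2n})`: the (continuous, hence in finite dimension all) real-linear
endomorphisms of `ℝ^{2n}`; multiplication is composition. -/
abbrev EndE (n : ℕ) : Type := V n →L[ℝ] V n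

/-- The set `𝔠_n` of complex structures on `ℝ^{2n}`. -/
def CS (n : ℕ) : Set (EndE n) := {I | I * I = -1}

/-- The slice `ℂ_I = {x·id + y·I : x, y ∈ ℝ}`. -/
def CI {n : ℕ} (I : EndE n) : Set (EndE n) := {A | ∃ x y : ℝ, A = x • (1 : EndE n) + y • I}

/-- The slice `ℂ_I^d ⊆ [End(ℝ^{2n})]^d`. -/
def CId (n d : ℕ) (I : EndE n) : Set (Fin d → EndE n) := {q | ∀ ℓ, q ℓ ∈ CI I}

/-- `ℝ^d` identified with the tuples `(x₁·id, …, x_d·id)`. -/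
def RealSet (n d : ℕ) : Set (Fin d → EndE n) := {q | ∀ ℓ, ∃ x : ℝ, q ℓ = x • (1 : EndE n)}

/-- The weak slice-cone `W = ⋃_{I ∈ 𝒞} ℂ_I^d`. -/
def Wcone (n d : ℕ) (𝒞 : Set (EndE n)) : Set (Fin d → EndE n) := ⋃ I ∈ 𝒞, CId n d I

/-- `Ω` is slice-open: `Ω ⊆ W` and for every `I ∈ 𝒞`, `Ω ∩ ℂ_I^d` is open in the
Euclidean (subspace) topology of `ℂ_I^d`. -/
def SliceOpen (n d : ℕ) (𝒞 : Set (EndE n)) (Ω : Set (Fin d → EndE n)) : Prop :=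
  Ω ⊆ Wcone n d 𝒞 ∧ ∀ I ∈ 𝒞, ∃ U : Set (Fin d → EndE n), IsOpen U ∧ Ω ∩ CId n d I = U ∩ CId n d I

/-- The slice topology `τ_s`: a set is open iff its intersection with each slice `ℂ_I^d`
(`I ∈ 𝒞`) is open in the Euclidean topology of the slice. -/
def sliceTop (n d : ℕ) (𝒞 : Set (EndE n)) : TopologicalSpace (Fin d → EndE n) :=
  ⨆ I ∈ 𝒞, TopologicalSpace.coinduced (Subtype.val : CId n d I → Fin d → EndE n) inferInstance

/-- A slice-domain: a nonempty slice-open set, connected in the slice topology. -/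
def SliceDomain (n d : ℕ) (𝒞 : Set (EndE n)) (Ω : Set (Fin d → EndE n)) : Prop :=
  SliceOpen n d 𝒞 Ω ∧ @IsConnected _ (sliceTop n d 𝒞) Ω

/-- `Ω` is real-connected: `Ω ∩ ℝ^d` is connected (empty counts as connected). -/
def RealConnected (n d : ℕ) (Ω : Set (Fin d → EndE n)) : Prop :=
  IsPreconnected (Ω ∩ RealSet n d)


namespace SliceAux
variable {n d : ℕ}

variable {n d : ℕ}

lemma one_ne_zero' (hn : 1 ≤ n) : (1 : EndE n) ≠ 0 := by
  intro h
  have h2 : (0:ℕ) < 2 * n := by omega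
  have h3 := congrArg (fun (f : EndE n) => f (EuclideanSpace.single (⟨0, h2⟩ : Fin (2*n)) (1:ℝ))) h
  simp only [ContinuousLinearMap.one_apply, ContinuousLinearMap.zero_apply] at h3
  have h4 := congrArg (fun v => v (⟨0, h2⟩ : Fin (2*n))) h3
  simp [EuclideanSpace.single_apply] at h4

lemma smul_one_eq_zero {a : ℝ} (hn : 1 ≤ n) (h : a • (1 : EndE n) = 0) : a = 0 := by
  by_contra ha
  have h2 := congrArg (fun x => (a⁻¹ : ℝ) • x) h
  simp only [smul_smul, inv_mul_cancel₀ ha, one_smul] at h2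
  apply one_ne_zero' hn
  rw [h2]; module

lemma smul_one_mul_smul_one (c e : ℝ) : (c • (1:EndE n)) * (e • (1:EndE n)) = (c*e) • (1:EndE n) := by
  ext v; simp [ContinuousLinearMap.mul_apply, smul_smul]; ring_nf; simp

lemma lin_indep (hn : 1 ≤ n) {K : EndE n} (hK : K * K = -1) {a b : ℝ}
    (h : a • (1 : EndE n) + b • K = 0) : a = 0 ∧ b = 0 := by
  by_cases hb : b = 0
  · subst hb
    refine ⟨smul_one_eq_zero hn ?_, rfl⟩
    linear_combination (norm := module) h
  · exfalso
    have hKeq : K = (-(a/b)) • (1 : EndE n) := by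
      have h1 : K = (b⁻¹ : ℝ) • (b • K) := by rw [smul_smul, inv_mul_cancel₀ hb, one_smul]
      rw [h1]
      have h2 : b • K = -(a • (1:EndE n)) := by linear_combination (norm := module) h
      rw [h2]; match_scalars; field_simp
    rw [hKeq, smul_one_mul_smul_one] at hK
    have h2 : ((-(a/b)) * (-(a/b)) + 1) • (1 : EndE n) = 0 := by
      rw [add_smul (M := EndE n), hK, one_smul]; simp
    have h3 : (-(a/b)) * (-(a/b)) + 1 ≠ 0 := by nlinarith [sq_nonneg (a/b)]
    exact h3 (smul_one_eq_zero hn h2)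

lemma coeff_eq (hn : 1 ≤ n) {K : EndE n} (hK : K * K = -1) {a b a' b' : ℝ}
    (h : a • (1 : EndE n) + b • K = a' • (1 : EndE n) + b' • K) : a = a' ∧ b = b' := by
  have h0 : (a - a') • (1 : EndE n) + (b - b') • K = 0 := by
    linear_combination (norm := module) h
  obtain ⟨h1, h2⟩ := lin_indep hn hK h0
  constructor <;> linarith

lemma CI_neg (I : EndE n) : CI (-I) = CI I := by
  ext a
  constructor <;> rintro ⟨x, y, rfl⟩
  · exact ⟨x, -y, by module⟩
  · exact ⟨x, -y, by module⟩

lemma CId_neg (I : EndE n) : CId n d (-I) = CId n d I := by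
  unfold CId; rw [CI_neg]

lemma real_mem_CI {A : EndE n} (h : ∃ x : ℝ, A = x • (1 : EndE n)) (I : EndE n) : A ∈ CI I := by
  obtain ⟨x, rfl⟩ := h
  exact ⟨x, 0, by module⟩

lemma RealSet_subset_CId (I : EndE n) : RealSet n d ⊆ CId n d I :=
  fun p hp ℓ => real_mem_CI (hp ℓ) I

lemma CI_inter (hn : 1 ≤ n) {J K : EndE n} (hJ : J * J = -1) (hK : K * K = -1)
    (hne : J ≠ K) (hne' : J ≠ -K) {a : EndE n} (ha : a ∈ CI J ∩ CI K) :
    ∃ x : ℝ, a = x • (1 : EndE n) := by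
  obtain ⟨⟨x, y, rfl⟩, ⟨x', y', he⟩⟩ := ha
  by_cases hy : y = 0
  · exact ⟨x, by rw [hy]; module⟩
  · exfalso
    have hJeq : J = ((x'-x)/y) • (1 : EndE n) + (y'/y) • K := by
      have h1 : J = (y⁻¹ : ℝ) • (y • J) := by rw [smul_smul, inv_mul_cancel₀ hy, one_smul]
      rw [h1]
      have h2 : y • J = (x'-x) • (1:EndE n) + y' • K := by
        linear_combination (norm := module) he
      rw [h2]; match_scalars <;> field_simp
    set c := (x'-x)/y
    set b := y'/y
    have hexp : J * J = (c*c - b*b) • (1:EndE n) + (2*(c*b)) • K := by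
      rw [hJeq]
      rw [add_mul, mul_add, mul_add, smul_one_mul_smul_one]
      have e1 : (c • (1:EndE n)) * (b • K) = (c*b) • K := by
        ext v; simp [ContinuousLinearMap.mul_apply, smul_smul]; ring_nf; simp
      have e2 : (b • K) * (c • (1:EndE n)) = (b*c) • K := by
        ext v; simp [ContinuousLinearMap.mul_apply, smul_smul]; ring_nf; simp
      have e3 : (b • K) * (b • K) = (b*b) • (K*K) := by
        ext v; simp [ContinuousLinearMap.mul_apply, smul_smul]
      rw [e1, e2, e3, hK]
      match_scalars <;> ring
    rw [hJ] at hexp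
    have hm1 : (-1 : EndE n) = (-1 : ℝ) • (1:EndE n) + (0:ℝ) • K := by module
    rw [hm1] at hexp
    obtain ⟨h1, h2⟩ := coeff_eq hn hK hexp
    rcases mul_eq_zero.mp (by linarith : c * b = 0) with hc | hb0
    · -- c = 0, so b * b = 1, J = ±K
      have hb1 : b = 1 ∨ b = -1 := mul_self_eq_one_iff.mp (by rw [hc] at h1; linarith)
      rcases hb1 with hb | hb
      · apply hne
        rw [hJeq, hc, hb]; module
      · apply hne'
        rw [hJeq, hc, hb]; module
    · rw [hb0] at h1
      nlinarith


variable {n d : ℕ}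

lemma CI_eq_span (I : EndE n) : CI I = ↑(Submodule.span ℝ {(1 : EndE n), I}) := by
  ext a
  rw [SetLike.mem_coe, Submodule.mem_span_pair]
  constructor
  · rintro ⟨x, y, rfl⟩; exact ⟨x, y, rfl⟩
  · rintro ⟨x, y, h⟩; exact ⟨x, y, h.symm⟩

lemma CId_eq_submodule (I : EndE n) :
    CId n d I = ↑(Submodule.pi Set.univ fun _ : Fin d => Submodule.span ℝ {(1 : EndE n), I}) := by
  ext p
  rw [SetLike.mem_coe, Submodule.mem_pi]
  constructor
  · intro h ℓ _
    have := h ℓ; rw [CI_eq_span] at this; exact this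
  · intro h ℓ
    rw [CI_eq_span]; exact h ℓ (Set.mem_univ ℓ)

lemma convex_CId (I : EndE n) : Convex ℝ (CId n d I) := by
  rw [CId_eq_submodule]; exact Submodule.convex _

lemma RealSet_eq_submodule :
    RealSet n d = ↑(Submodule.pi Set.univ fun _ : Fin d => Submodule.span ℝ {(1 : EndE n)}) := by
  ext p
  rw [SetLike.mem_coe, Submodule.mem_pi]
  constructor
  · intro h ℓ _
    rw [Submodule.mem_span_singleton]
    obtain ⟨x, hx⟩ := h ℓ; exact ⟨x, hx.symm⟩
  · intro h ℓ
    obtain ⟨x, hx⟩ := Submodule.mem_span_singleton.mp (h ℓ (Set.mem_univ ℓ))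
    exact ⟨x, hx.symm⟩

lemma convex_RealSet : Convex ℝ (RealSet n d) := by
  rw [RealSet_eq_submodule]; exact Submodule.convex _

lemma isClosed_RealSet : IsClosed (RealSet n d) := by
  have : RealSet n d = ⋂ ℓ : Fin d, (fun p : Fin d → EndE n => p ℓ) ⁻¹'
      ↑(Submodule.span ℝ {(1 : EndE n)}) := by
    ext p
    simp only [Set.mem_iInter, Set.mem_preimage, SetLike.mem_coe, Submodule.mem_span_singleton]
    constructor
    · intro h ℓ; obtain ⟨x, hx⟩ := h ℓ; exact ⟨x, hx.symm⟩
    · intro h ℓ; obtain ⟨x, hx⟩ := h ℓ; exact ⟨x, hx.symm⟩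
  rw [this]
  exact isClosed_iInter fun ℓ =>
    (Submodule.closed_of_finiteDimensional _).preimage (continuous_apply ℓ)

/-- Lemma D: connected component in a relatively open subset of a convex set is
relatively open. -/
lemma exists_open_component {α : Type*} [NormedAddCommGroup α] [NormedSpace ℝ α]
    {S T G : Set α} (hS : Convex ℝ S) (hG : IsOpen G) (hT : T = G ∩ S)
    {q : α} (hq : q ∈ T) :
    ∃ G' : Set α, IsOpen G' ∧ connectedComponentIn T q = G' ∩ S := by
  set C := connectedComponentIn T q with hC
  have hCT : C ⊆ T := connectedComponentIn_subset T q
  have hball : ∀ p ∈ C, ∃ ρ : ℝ, 0 < ρ ∧ Metric.ball p ρ ⊆ G := by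
    intro p hp
    have : p ∈ G := (hT ▸ hCT hp).1
    obtain ⟨ρ, hρ, hball⟩ := Metric.isOpen_iff.mp hG p this
    exact ⟨ρ, hρ, hball⟩
  choose! ρ hρpos hρball using hball
  refine ⟨⋃ p ∈ C, Metric.ball p (ρ p), isOpen_biUnion fun p _ => Metric.isOpen_ball, ?_⟩
  apply Set.Subset.antisymm
  · intro p hp
    refine ⟨Set.mem_biUnion hp (Metric.mem_ball_self (hρpos p hp)), (hT ▸ hCT hp).2⟩
  · rintro x ⟨hxU, hxS⟩
    obtain ⟨p, hpC, hx⟩ := Set.mem_iUnion₂.mp hxU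
    have hsub : Metric.ball p (ρ p) ∩ S ⊆ T := by
      rw [hT]; exact Set.inter_subset_inter_left S (hρball p hpC)
    have hconv : Convex ℝ (Metric.ball p (ρ p) ∩ S) := (convex_ball p (ρ p)).inter hS
    have hpmem : p ∈ Metric.ball p (ρ p) ∩ S :=
      ⟨Metric.mem_ball_self (hρpos p hpC), (hT ▸ hCT hpC).2⟩
    have := hconv.isPreconnected.subset_connectedComponentIn hpmem hsub
    rw [← connectedComponentIn_eq hpC] at this
    exact this ⟨hx, hxS⟩

/-- Lemma A: ambient-preconnected subsets of a single slice are preconnected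
in the slice topology. -/
lemma preconn_sliceTop (𝒞 : Set (EndE n)) {I : EndE n} (hI : I ∈ 𝒞)
    {s : Set (Fin d → EndE n)} (hs : s ⊆ CId n d I) (h : IsPreconnected s) :
    @IsPreconnected _ (sliceTop n d 𝒞) s := by
  intro A B hA hB hcov hsA hsB
  have key : ∀ X : Set (Fin d → EndE n), @IsOpen _ (sliceTop n d 𝒞) X →
      ∃ X₀ : Set (Fin d → EndE n), IsOpen X₀ ∧ ∀ p (hp : p ∈ CId n d I), (p ∈ X₀ ↔ p ∈ X) := by
    intro X hX
    have h1 : @IsOpen _ (TopologicalSpace.coinduced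
        (Subtype.val : CId n d I → Fin d → EndE n) inferInstance) X := by
      have h2 : @IsOpen _ (sliceTop n d 𝒞) X := hX
      rw [sliceTop] at h2
      have h3 := (@isOpen_iSup_iff _ _ _ X).mp h2 I
      exact (@isOpen_iSup_iff _ _ _ X).mp h3 hI
    rw [isOpen_coinduced] at h1
    obtain ⟨X₀, hX₀, hpre⟩ := isOpen_induced_iff.mp h1
    refine ⟨X₀, hX₀, fun p hp => ?_⟩
    constructor
    · intro hpx
      have : (⟨p, hp⟩ : CId n d I) ∈ Subtype.val ⁻¹' X₀ := hpx
      rw [hpre] at this; exact this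
    · intro hpx
      have : (⟨p, hp⟩ : CId n d I) ∈ Subtype.val ⁻¹' X := hpx
      rw [← hpre] at this; exact this
  obtain ⟨A₀, hA₀, hAeq⟩ := key A hA
  obtain ⟨B₀, hB₀, hBeq⟩ := key B hB
  have hcov' : s ⊆ A₀ ∪ B₀ := by
    intro x hx
    rcases hcov hx with h' | h'
    · exact Or.inl ((hAeq x (hs hx)).mpr h')
    · exact Or.inr ((hBeq x (hs hx)).mpr h')
  have hsA' : (s ∩ A₀).Nonempty := by
    obtain ⟨a, ha, haA⟩ := hsA
    exact ⟨a, ha, (hAeq a (hs ha)).mpr haA⟩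
  have hsB' : (s ∩ B₀).Nonempty := by
    obtain ⟨b, hb, hbB⟩ := hsB
    exact ⟨b, hb, (hBeq b (hs hb)).mpr hbB⟩
  obtain ⟨x, hxs, hxA, hxB⟩ := h A₀ B₀ hA₀ hB₀ hcov' hsA' hsB'
  exact ⟨x, hxs, (hAeq x (hs hxs)).mp hxA, (hBeq x (hs hxs)).mp hxB⟩


end SliceAux

/-- Every point of a slice-open set lies in a real-connected slice-domain contained in it. -/
theorem exists_realConnected_sliceDomain (n d : ℕ) (hn : 1 ≤ n) (hd : 1 ≤ d)
    (𝒞 : Set (EndE n)) (h𝒞 : 𝒞.Nonempty) (hsym : ∀ I ∈ 𝒞, -I ∈ 𝒞) (hcs : 𝒞 ⊆ CS n)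
    (Ω : Set (Fin d → EndE n)) (hΩ : SliceOpen n d 𝒞 Ω)
    (q : Fin d → EndE n) (hq : q ∈ Ω) :
    ∃ U : Set (Fin d → EndE n),
      SliceDomain n d 𝒞 U ∧ RealConnected n d U ∧ q ∈ U ∧ U ⊆ Ω := by
  classical
  open SliceAux in
  obtain ⟨hΩW, hsl⟩ := hΩ
  have hqW := hΩW hq
  rw [Wcone, Set.mem_iUnion₂] at hqW
  obtain ⟨I, hI, hqI⟩ := hqW
  obtain ⟨VI, hVIopen, hVIeq⟩ := hsl I hI
  have hqVI : q ∈ VI := by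
    have h1 : q ∈ Ω ∩ CId n d I := ⟨hq, hqI⟩
    rw [hVIeq] at h1; exact h1.1
  by_cases hqR : q ∈ RealSet n d
  · -- Case 2 : q is real
    obtain ⟨r, hr, hball⟩ := Metric.isOpen_iff.mp hVIopen q hqVI
    set R : Set (Fin d → EndE n) := Metric.ball q r ∩ RealSet n d with hRdef
    have hRΩ : R ⊆ Ω := by
      rintro x ⟨hx1, hx2⟩
      have h1 : x ∈ VI ∩ CId n d I := ⟨hball hx1, RealSet_subset_CId I hx2⟩
      rw [← hVIeq] at h1; exact h1.1
    set T : EndE n → Set (Fin d → EndE n) := fun J =>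
      (Ω ∩ CId n d J ∩ Metric.ball q r) ∪ (Ω ∩ CId n d J ∩ (RealSet n d)ᶜ) with hTdef
    set C : EndE n → Set (Fin d → EndE n) := fun J => connectedComponentIn (T J) q with hCdef
    have hqT : ∀ J : EndE n, q ∈ T J := fun J =>
      Or.inl ⟨⟨hq, RealSet_subset_CId J hqR⟩, Metric.mem_ball_self hr⟩
    have hTsub : ∀ J : EndE n, T J ⊆ Ω ∩ CId n d J := by
      intro J x hx
      rcases hx with ⟨h1, _⟩ | ⟨h1, _⟩ <;> exact h1
    have hRT : ∀ J : EndE n, R ⊆ T J := by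
      rintro J x ⟨hx1, hx2⟩
      exact Or.inl ⟨⟨hRΩ ⟨hx1, hx2⟩, RealSet_subset_CId J hx2⟩, hx1⟩
    have hRpre : IsPreconnected R := ((convex_ball q r).inter convex_RealSet).isPreconnected
    have hqRmem : q ∈ R := ⟨Metric.mem_ball_self hr, hqR⟩
    have hRC : ∀ J : EndE n, R ⊆ C J := fun J =>
      hRpre.subset_connectedComponentIn hqRmem (hRT J)
    have hTR : ∀ J : EndE n, T J ∩ RealSet n d ⊆ R := by
      rintro J x ⟨hx1 | hx1, hx2⟩
      · exact ⟨hx1.2, hx2⟩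
      · exact absurd hx2 hx1.2
    have hCT : ∀ J : EndE n, C J ⊆ T J := fun J => connectedComponentIn_subset _ _
    have hCsub : ∀ J : EndE n, C J ⊆ CId n d J := fun J x hx => (hTsub J (hCT J hx)).2
    have hCΩ : ∀ J : EndE n, C J ⊆ Ω := fun J x hx => (hTsub J (hCT J hx)).1
    have hqC : ∀ J : EndE n, q ∈ C J := fun J => mem_connectedComponentIn (hqT J)
    have hCeq : ∀ J K : EndE n, CId n d K = CId n d J → C K = C J := by
      intro J K h
      have hT2 : T K = T J := by rw [hTdef]; simp only; rw [h]
      rw [hCdef]; simp only; rw [hT2]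
    set U : Set (Fin d → EndE n) := ⋃ J ∈ 𝒞, C J with hUdef
    have hqU : q ∈ U := Set.mem_biUnion hI (hqC I)
    have hUΩ : U ⊆ Ω := Set.iUnion₂_subset fun J _ => hCΩ J
    have hUCId : ∀ J ∈ 𝒞, U ∩ CId n d J = C J := by
      intro J hJ
      apply Set.Subset.antisymm
      · rintro x ⟨hxU, hxJ⟩
        obtain ⟨K, hK, hxC⟩ := Set.mem_iUnion₂.mp hxU
        by_cases hKJ : K = J ∨ K = -J
        · have hCIdeq : CId n d K = CId n d J := by
            rcases hKJ with h | h
            · rw [h]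
            · rw [h, CId_neg]
          rw [← hCeq J K hCIdeq]; exact hxC
        · push_neg at hKJ
          have hxR : x ∈ RealSet n d := fun ℓ =>
            CI_inter hn (hcs hK) (hcs hJ) hKJ.1 hKJ.2 ⟨hCsub K hxC ℓ, hxJ ℓ⟩
          exact hRC J (hTR K ⟨hCT K hxC, hxR⟩)
      · intro x hx
        exact ⟨Set.mem_biUnion hJ hx, hCsub J hx⟩
    have hUreal : U ∩ RealSet n d = R := by
      apply Set.Subset.antisymm
      · rintro x ⟨hxU, hxR⟩
        obtain ⟨K, hK, hxC⟩ := Set.mem_iUnion₂.mp hxU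
        exact hTR K ⟨hCT K hxC, hxR⟩
      · intro x hx
        exact ⟨Set.mem_biUnion hI (hRC I hx), hx.2⟩
    refine ⟨U, ⟨⟨?_, ?_⟩, ⟨q, hqU⟩, ?_⟩, ?_, hqU, hUΩ⟩
    · -- U ⊆ W
      intro x hx
      obtain ⟨K, hK, hxC⟩ := Set.mem_iUnion₂.mp hx
      exact Set.mem_biUnion hK (hCsub K hxC)
    · -- slice-openness
      intro J hJ
      obtain ⟨VJ, hVJopen, hVJeq⟩ := hsl J hJ
      have hGopen : IsOpen ((VJ ∩ Metric.ball q r) ∪ (VJ ∩ (RealSet n d)ᶜ)) :=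
        (hVJopen.inter Metric.isOpen_ball).union (hVJopen.inter isClosed_RealSet.isOpen_compl)
      have hTG : T J = ((VJ ∩ Metric.ball q r) ∪ (VJ ∩ (RealSet n d)ᶜ)) ∩ CId n d J := by
        rw [hTdef]; simp only; rw [hVJeq]
        ext x
        simp only [Set.mem_union, Set.mem_inter_iff, Set.mem_compl_iff]
        tauto
      obtain ⟨G', hG'open, hG'eq⟩ := exists_open_component (convex_CId J) hGopen hTG (hqT J)
      refine ⟨G', hG'open, ?_⟩
      rw [hUCId J hJ, hCdef]; simp only; rw [hG'eq]
    · -- preconnected in the slice topology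
      intro A B hA hB hcov hsA hsB
      have hCpre : ∀ J ∈ 𝒞, @IsPreconnected _ (sliceTop n d 𝒞) (C J) := by
        intro J hJ
        apply preconn_sliceTop 𝒞 hJ (hCsub J)
        rw [hCdef]; simp only
        exact isPreconnected_connectedComponentIn
      have hcovC : ∀ J ∈ 𝒞, C J ⊆ A ∪ B := fun J hJ x hx =>
        hcov (Set.mem_biUnion hJ hx)
      rcases hcov hqU with hqA | hqB
      · obtain ⟨b, hbU, hbB⟩ := hsB
        obtain ⟨K, hK, hbC⟩ := Set.mem_iUnion₂.mp hbU
        obtain ⟨x, hxC, hxA, hxB⟩ := hCpre K hK A B hA hB (hcovC K hK)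
          ⟨q, hqC K, hqA⟩ ⟨b, hbC, hbB⟩
        exact ⟨x, Set.mem_biUnion hK hxC, hxA, hxB⟩
      · obtain ⟨a, haU, haA⟩ := hsA
        obtain ⟨K, hK, haC⟩ := Set.mem_iUnion₂.mp haU
        obtain ⟨x, hxC, hxA, hxB⟩ := hCpre K hK A B hA hB (hcovC K hK)
          ⟨a, haC, haA⟩ ⟨q, hqC K, hqB⟩
        exact ⟨x, Set.mem_biUnion hK hxC, hxA, hxB⟩
    · -- real-connected
      show IsPreconnected (U ∩ RealSet n d)
      rw [hUreal]; exact hRpre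
  · -- Case 1 : q is not real
    have hopen : IsOpen (VI ∩ (RealSet n d)ᶜ) := hVIopen.inter isClosed_RealSet.isOpen_compl
    obtain ⟨r, hr, hball⟩ := Metric.isOpen_iff.mp hopen q ⟨hqVI, hqR⟩
    set U : Set (Fin d → EndE n) := Metric.ball q r ∩ CId n d I with hUdef
    have hqU : q ∈ U := ⟨Metric.mem_ball_self hr, hqI⟩
    have hUR : U ∩ RealSet n d = ∅ := by
      ext x
      simp only [Set.mem_inter_iff, Set.mem_empty_iff_false, iff_false, not_and]
      rintro ⟨hx1, _⟩ hx3
      exact (hball hx1).2 hx3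
    have hUΩ : U ⊆ Ω := by
      rintro x ⟨hx1, hx2⟩
      have h1 : x ∈ VI ∩ CId n d I := ⟨(hball hx1).1, hx2⟩
      rw [← hVIeq] at h1; exact h1.1
    refine ⟨U, ⟨⟨?_, ?_⟩, ⟨q, hqU⟩, ?_⟩, ?_, hqU, hUΩ⟩
    · intro x hx
      exact Set.mem_biUnion hI hx.2
    · intro J hJ
      by_cases hJI : J = I ∨ J = -I
      · have hCIdeq : CId n d J = CId n d I := by
          rcases hJI with h | h
          · rw [h]
          · rw [h, CId_neg]
        refine ⟨Metric.ball q r, Metric.isOpen_ball, ?_⟩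
        rw [hCIdeq, hUdef]
        ext x
        simp only [Set.mem_inter_iff]
        tauto
      · push_neg at hJI
        refine ⟨∅, isOpen_empty, ?_⟩
        rw [Set.empty_inter]
        ext x
        simp only [Set.mem_inter_iff, Set.mem_empty_iff_false, iff_false, not_and]
        intro hxU hxJ
        have hIJ1 : I ≠ J := fun h => hJI.1 h.symm
        have hIJ2 : I ≠ -J := by
          intro h
          apply hJI.2
          rw [h, neg_neg]
        have hxR : x ∈ RealSet n d := fun ℓ =>
          CI_inter hn (hcs hI) (hcs hJ) hIJ1 hIJ2 ⟨hxU.2 ℓ, hxJ ℓ⟩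
        have : x ∈ U ∩ RealSet n d := ⟨hxU, hxR⟩
        rw [hUR] at this
        exact this
    · exact preconn_sliceTop 𝒞 hI Set.inter_subset_right
        ((convex_ball q r).inter (convex_CId I)).isPreconnected
    · show IsPreconnected (U ∩ RealSet n d)
      rw [hUR]; exact isPreconnected_empty
end
end

section
/- Let Ω be a real-connected slice-domain in W with Ω ∩ ℝ^d = ∅. Then there exists I ∈ 𝒞 such that Ω ⊆ ℂ_I^d. -/
noncomputable section

instance (n : ℕ) : IsScalarTower ℝ (EndE n) (EndE n) :=
  ⟨fun c A B => by ext v; simp [ContinuousLinearMap.mul_apply]⟩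
instance (n : ℕ) : SMulCommClass ℝ (EndE n) (EndE n) :=
  ⟨fun c A B => by ext v; simp [ContinuousLinearMap.mul_apply]⟩

lemma aux_smul_one_eq_zero {n : ℕ} (hn : 1 ≤ n) {c : ℝ} (h : c • (1 : EndE n) = 0) : c = 0 := by
  have i0 : Fin (2 * n) := ⟨0, by omega⟩
  have h1 : (c • (1 : EndE n)) (EuclideanSpace.single i0 1) =
      (0 : EndE n) (EuclideanSpace.single i0 1) := by rw [h]
  simp only [ContinuousLinearMap.smul_apply, ContinuousLinearMap.one_apply,
    ContinuousLinearMap.zero_apply] at h1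
  have h3 := congrArg (fun v => v i0) h1
  simpa [EuclideanSpace.single_apply] using h3

lemma aux_sq {n : ℕ} {J : EndE n} (hJ : J * J = -1) (a b : ℝ) :
    (a • (1 : EndE n) + b • J) * (a • (1 : EndE n) + b • J)
      = (a * a - b * b) • (1 : EndE n) + (2 * a * b) • J := by
  simp only [mul_add, add_mul, smul_mul_smul_comm, one_mul, mul_one, hJ]
  module

lemma aux_indep {n : ℕ} (hn : 1 ≤ n) {J : EndE n} (hJ : J ∈ CS n) {x y : ℝ}
    (h : x • (1 : EndE n) + y • J = 0) : x = 0 ∧ y = 0 := by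
  have key : (x * x + y * y) • (1 : EndE n) = 0 := by
    have h2 : (x • (1 : EndE n) + y • J) * (x • (1 : EndE n) + y • J) = 0 := by
      rw [h]; simp
    rw [aux_sq hJ] at h2
    linear_combination (norm := module) (2 * x : ℝ) • h - h2
  have hxy : x * x + y * y = 0 := aux_smul_one_eq_zero hn key
  constructor <;> nlinarith

lemma aux_slice_inter {n : ℕ} (hn : 1 ≤ n) {I J : EndE n} (hI : I ∈ CS n) (hJ : J ∈ CS n)
    (hne : I ≠ J) (hne' : I ≠ -J) {A : EndE n} (hAI : A ∈ CI I) (hAJ : A ∈ CI J) :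
    ∃ r : ℝ, A = r • (1 : EndE n) := by
  obtain ⟨x, y, rfl⟩ := hAI
  obtain ⟨x', y', hA'⟩ := hAJ
  by_cases hy : y = 0
  · refine ⟨x, ?_⟩; subst hy; module
  exfalso
  have hyI : y • I = (x' - x) • (1 : EndE n) + y' • J := by
    linear_combination (norm := module) hA'
  have hsq : ((x' - x) * (x' - x) - y' * y' + y * y) • (1 : EndE n)
      + (2 * (x' - x) * y') • J = 0 := by
    have h1 : (y • I) * (y • I) = (y * y) • (I * I) := by
      rw [smul_mul_smul_comm]
    rw [hI, hyI, aux_sq hJ] at h1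
    linear_combination (norm := module) h1
  obtain ⟨h1, h2⟩ := aux_indep hn hJ hsq
  have hy' : y' ≠ 0 := by
    intro h0; rw [h0] at h1
    nlinarith [mul_self_pos.mpr hy, mul_self_nonneg (x' - x)]
  have hxx : x' - x = 0 := by
    rcases mul_eq_zero.mp h2 with h | h
    · rcases mul_eq_zero.mp h with h | h
      · norm_num at h
      · exact h
    · exact absurd h hy'
  have hyy : y' = y ∨ y' = -y := by
    rw [hxx] at h1
    have : (y' - y) * (y' + y) = 0 := by nlinarith
    rcases mul_eq_zero.mp this with h | h
    · left; linarith
    · right; linarith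
  have hyI' : y • I = y' • J := by rw [hxx] at hyI; linear_combination (norm := module) hyI
  rcases hyy with rfl | rfl
  · exact hne (smul_right_injective (EndE n) hy hyI')
  · apply hne'
    have : y • I = y • (-J) := by rw [hyI']; module
    exact smul_right_injective (EndE n) hy this
  
lemma aux_CI_neg {n : ℕ} (I : EndE n) : CI (-I) = CI I := by
  ext A
  constructor <;> rintro ⟨x, y, rfl⟩
  · exact ⟨x, -y, by module⟩
  · exact ⟨x, -y, by module⟩

lemma aux_CId_neg (n d : ℕ) (I : EndE n) : CId n d (-I) = CId n d I := by
  unfold CId; rw [aux_CI_neg]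

lemma sliceTop_isOpen_iff (n d : ℕ) (𝒞 : Set (EndE n)) (s : Set (Fin d → EndE n)) :
    @IsOpen _ (sliceTop n d 𝒞) s ↔
      ∀ I ∈ 𝒞, ∃ U : Set (Fin d → EndE n), IsOpen U ∧ s ∩ CId n d I = U ∩ CId n d I := by
  rw [sliceTop, isOpen_iSup_iff]
  refine forall_congr' fun I => ?_
  rw [isOpen_iSup_iff]
  refine forall_congr' fun hI => ?_
  rw [isOpen_coinduced, isOpen_induced_iff]
  constructor
  · rintro ⟨U, hU, hUs⟩
    refine ⟨U, hU, ?_⟩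
    have := (Subtype.preimage_coe_eq_preimage_coe_iff).mp hUs
    rw [Set.inter_comm s, Set.inter_comm U, this]
  · rintro ⟨U, hU, hUs⟩
    refine ⟨U, hU, Subtype.preimage_coe_eq_preimage_coe_iff.mpr ?_⟩
    rw [Set.inter_comm _ U, ← hUs, Set.inter_comm]

/-- A real-connected slice-domain avoiding the reals lies in a single slice. -/
theorem sliceDomain_subset_slice_of_no_reals (n d : ℕ) (hn : 1 ≤ n) (hd : 1 ≤ d)
    (𝒞 : Set (EndE n)) (h𝒞 : 𝒞.Nonempty) (hsym : ∀ I ∈ 𝒞, -I ∈ 𝒞) (hcs : 𝒞 ⊆ CS n)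
    (Ω : Set (Fin d → EndE n)) (hΩ : SliceDomain n d 𝒞 Ω) (hrc : RealConnected n d Ω)
    (hreal : Ω ∩ RealSet n d = ∅) :
    ∃ I ∈ 𝒞, Ω ⊆ CId n d I := by
  obtain ⟨⟨hsub, hrel⟩, hne, hpre⟩ := hΩ
  obtain ⟨q₀, hq₀⟩ := hne
  obtain ⟨I, hI, hq₀I⟩ : ∃ I ∈ 𝒞, q₀ ∈ CId n d I := by
    have := hsub hq₀
    simpa [Wcone, Set.mem_iUnion] using this
  refine ⟨I, hI, ?_⟩
  -- disjointness of distinct slices inside Ω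
  have hdisj : ∀ J ∈ 𝒞, J ≠ I → J ≠ -I → Ω ∩ CId n d I ∩ CId n d J = ∅ := by
    intro J hJ h1 h2
    rw [Set.eq_empty_iff_forall_notMem]
    rintro q ⟨⟨hqΩ, hqI⟩, hqJ⟩
    have hreal' : q ∈ Ω ∩ RealSet n d := by
      refine ⟨hqΩ, fun ℓ => ?_⟩
      refine aux_slice_inter hn (hcs hI) (hcs hJ) ?_ ?_ (hqI ℓ) (hqJ ℓ)
      · exact fun h => h1 h.symm
      · intro h
        apply h2
        rw [h]; simp
    rw [hreal] at hreal'
    exact hreal'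
  set u : Set (Fin d → EndE n) := Ω ∩ CId n d I with hu_def
  set v : Set (Fin d → EndE n) := Ω \ CId n d I with hv_def
  have hu : @IsOpen _ (sliceTop n d 𝒞) u := by
    rw [sliceTop_isOpen_iff]
    intro J hJ
    by_cases hJI : J = I ∨ J = -I
    · obtain ⟨U, hU, hUe⟩ := hrel I hI
      have hCJ : CId n d J = CId n d I := by
        rcases hJI with rfl | rfl
        · rfl
        · exact aux_CId_neg n d I
      refine ⟨U, hU, ?_⟩
      rw [hCJ, hu_def]
      rw [Set.inter_assoc, Set.inter_self, hUe]
    · push_neg at hJI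
      refine ⟨∅, isOpen_empty, ?_⟩
      rw [Set.empty_inter, hu_def]
      exact hdisj J hJ hJI.1 hJI.2
  have hv : @IsOpen _ (sliceTop n d 𝒞) v := by
    rw [sliceTop_isOpen_iff]
    intro J hJ
    by_cases hJI : J = I ∨ J = -I
    · have hCJ : CId n d J = CId n d I := by
        rcases hJI with rfl | rfl
        · rfl
        · exact aux_CId_neg n d I
      refine ⟨∅, isOpen_empty, ?_⟩
      rw [hCJ, Set.empty_inter, Set.eq_empty_iff_forall_notMem]
      rintro q ⟨⟨_, hqnI⟩, hqI⟩
      exact hqnI hqI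
    · push_neg at hJI
      obtain ⟨U, hU, hUe⟩ := hrel J hJ
      refine ⟨U, hU, ?_⟩
      rw [← hUe]
      have := hdisj J hJ hJI.1 hJI.2
      ext q
      constructor
      · rintro ⟨⟨hqΩ, _⟩, hqJ⟩
        exact ⟨hqΩ, hqJ⟩
      · rintro ⟨hqΩ, hqJ⟩
        refine ⟨⟨hqΩ, fun hqI => ?_⟩, hqJ⟩
        have : q ∈ Ω ∩ CId n d I ∩ CId n d J := ⟨⟨hqΩ, hqI⟩, hqJ⟩
        rw [hdisj J hJ hJI.1 hJI.2] at this
        exact this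
  intro q hq
  by_contra hqI
  have hcov : Ω ⊆ u ∪ v := fun p hp => by
    by_cases hpI : p ∈ CId n d I
    · exact Or.inl ⟨hp, hpI⟩
    · exact Or.inr ⟨hp, hpI⟩
  have hune : (Ω ∩ u).Nonempty := ⟨q₀, hq₀, hq₀, hq₀I⟩
  have hvne : (Ω ∩ v).Nonempty := ⟨q, hq, hq, hqI⟩
  obtain ⟨p, _, ⟨_, hpI⟩, _, hpnI⟩ := hpre u v hu hv hcov hune hvne
  exact hpnI hpI
end
end

section
/- Let Ω be a real-connected slice-domain in W with Ω ∩ ℝ^d ≠ ∅. Then for every q ∈ Ω and every x ∈ Ω ∩ ℝ^d there exist I ∈ 𝒞 and a continuous path γ : [0,1] → Ω with γ(0) = q, γ(1) = x and γ([0,1]) ⊆ ℂ_I^d (a path on a slice from q to x). -/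
noncomputable section

set_option synthInstance.maxHeartbeats 1000000
set_option maxHeartbeats 1000000

lemma exists_ne_zero_V {n : ℕ} (hn : 1 ≤ n) : ∃ v : V n, v ≠ 0 := by
  refine ⟨EuclideanSpace.single (⟨0, by omega⟩ : Fin (2*n)) (1:ℝ), fun h => ?_⟩
  have := congrArg (fun v : V n => v (⟨0, by omega⟩ : Fin (2*n))) h
  simp [EuclideanSpace.single] at this

lemma smul_one_eq_zero {n : ℕ} (hn : 1 ≤ n) {a : ℝ} (h : a • (1 : EndE n) = 0) : a = 0 := by
  obtain ⟨v, hv⟩ := exists_ne_zero_V hn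
  have h2 := congrArg (fun f : EndE n => f v) h
  simp at h2
  rcases h2 with h2 | h2
  · exact h2
  · exact absurd h2 hv

lemma indep {n : ℕ} (hn : 1 ≤ n) {J : EndE n} (hJ : J ∈ CS n) {a b : ℝ}
    (h : a • (1 : EndE n) + b • J = 0) : a = 0 ∧ b = 0 := by
  by_cases hb : b = 0
  · subst hb
    have h' : a • (1 : EndE n) = 0 := by linear_combination (norm := module) h
    exact ⟨smul_one_eq_zero hn h', rfl⟩
  · exfalso
    have h1 : b • J = -(a • (1 : EndE n)) := eq_neg_of_add_eq_zero_right h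
    have hJ' : J = (b⁻¹ * (-a)) • (1 : EndE n) := by
      have h2 : b⁻¹ • (b • J) = b⁻¹ • -(a • (1 : EndE n)) := by rw [h1]
      rw [inv_smul_smul₀ hb] at h2
      rw [h2]; module
    set c := b⁻¹ * (-a) with hc
    have h2 : J * J = (c * c) • (1 : EndE n) := by
      rw [hJ']; ext v; simp [smul_smul, mul_assoc]
    have h3 : (c * c) • (1 : EndE n) = (-1 : ℝ) • (1 : EndE n) := by
      rw [← h2, hJ.out]; module
    have h4 : ((c * c) - (-1)) • (1 : EndE n) = 0 := by
      linear_combination (norm := module) h3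
    have := smul_one_eq_zero hn h4
    nlinarith [sq_nonneg c]

lemma CI_smul_unit {n : ℕ} {J : EndE n} {b : ℝ} (hb : b ≠ 0) : CI (b • J) = CI J := by
  ext A
  constructor
  · rintro ⟨x, y, rfl⟩
    exact ⟨x, y * b, by module⟩
  · rintro ⟨x, y, rfl⟩
    exact ⟨x, y / b, by rw [smul_smul]; field_simp⟩

lemma slice_coincide {n : ℕ} (hn : 1 ≤ n) {I J : EndE n} (hI : I ∈ CS n) (hJ : J ∈ CS n)
    {A : EndE n} (hAI : A ∈ CI I) (hAJ : A ∈ CI J) (hA : ¬∃ x : ℝ, A = x • (1 : EndE n)) :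
    CI I = CI J := by
  obtain ⟨x, y, hxy⟩ := hAI
  obtain ⟨x', y', hxy'⟩ := hAJ
  have hy : y ≠ 0 := by
    rintro rfl
    exact hA ⟨x, by rw [hxy]; module⟩
  -- I = a • 1 + b • J with a = y⁻¹ * (x' - x), b = y⁻¹ * y'
  have hI' : I = (y⁻¹ * (x' - x)) • (1 : EndE n) + (y⁻¹ * y') • J := by
    have h1 : y • I = (x' - x) • (1 : EndE n) + y' • J := by
      linear_combination (norm := module) hxy.symm.trans hxy'
    have h2 : y⁻¹ • (y • I) = y⁻¹ • ((x' - x) • (1 : EndE n) + y' • J) := by rw [h1]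
    rw [inv_smul_smul₀ hy] at h2
    rw [h2]; module
  set a := y⁻¹ * (x' - x)
  set b := y⁻¹ * y'
  -- compute I * I
  have hmul : I * I = ((a*a) • (1 : EndE n) + (a*b) • J) + ((b*a) • J + (b*b) • (J*J)) := by
    rw [hI']; ext v
    simp [mul_add, add_mul, smul_smul, mul_assoc]
    try ring
  rw [hJ.out] at hmul
  have hmul2 : I * I = (a*a - b*b) • (1 : EndE n) + (2*(a*b)) • J := by
    rw [hmul]; module
  have hzero : ((a*a - b*b) - (-1)) • (1 : EndE n) + (2*(a*b)) • J = 0 := by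
    have := hI.out ▸ hmul2
    linear_combination (norm := module) this.symm
  obtain ⟨h1, h2⟩ := indep hn hJ hzero
  have hb : b ≠ 0 := by
    rintro hb0
    rw [hb0] at h1
    nlinarith [sq_nonneg a]
  have ha : a = 0 := by
    rcases mul_eq_zero.1 (by linarith : a * b = 0) with h | h
    · exact h
    · exact absurd h hb
  have hIJ : I = b • J := by rw [hI', ha]; module
  rw [hIJ, CI_smul_unit hb]

lemma realSet_subset_CId {n d : ℕ} (J : EndE n) : RealSet n d ⊆ CId n d J := by
  intro q hq ℓ
  obtain ⟨x, hx⟩ := hq ℓ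
  exact ⟨x, 0, by rw [hx]; module⟩

lemma CId_congr {n d : ℕ} {I J : EndE n} (h : CI I = CI J) : CId n d I = CId n d J := by
  ext q; exact forall_congr' fun ℓ => by rw [h]

def phiL (n d : ℕ) (J : EndE n) : (Fin d → ℝ × ℝ) →ₗ[ℝ] (Fin d → EndE n) where
  toFun z := fun ℓ => (z ℓ).1 • (1 : EndE n) + (z ℓ).2 • J
  map_add' z w := by funext ℓ; simp [Prod.fst_add, Prod.snd_add]; module
  map_smul' c z := by funext ℓ; simp [Prod.smul_fst, Prod.smul_snd]; module

lemma phiL_inj {n d : ℕ} (hn : 1 ≤ n) {J : EndE n} (hJ : J ∈ CS n) :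
    Function.Injective (phiL n d J) := by
  rw [← LinearMap.ker_eq_bot, LinearMap.ker_eq_bot']
  intro z hz
  funext ℓ
  have := congrFun hz ℓ
  obtain ⟨h1, h2⟩ := indep hn hJ this
  ext <;> simp [h1, h2]

lemma phiL_range {n d : ℕ} (J : EndE n) : Set.range (phiL n d J) = CId n d J := by
  ext q
  constructor
  · rintro ⟨z, rfl⟩ ℓ
    exact ⟨(z ℓ).1, (z ℓ).2, rfl⟩
  · intro hq
    choose xf yf hxy using hq
    exact ⟨fun ℓ => (xf ℓ, yf ℓ), funext fun ℓ => (hxy ℓ).symm⟩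

lemma phiL_isClosedEmbedding {n d : ℕ} (hn : 1 ≤ n) {J : EndE n} (hJ : J ∈ CS n) :
    Topology.IsClosedEmbedding (phiL n d J) :=
  LinearMap.isClosedEmbedding_of_injective (LinearMap.ker_eq_bot.2 (phiL_inj hn hJ))

def sliceHomeo {n d : ℕ} (hn : 1 ≤ n) {J : EndE n} (hJ : J ∈ CS n) :
    (Fin d → ℝ × ℝ) ≃ₜ (CId n d J) :=
  ((phiL_isClosedEmbedding hn hJ).toIsEmbedding.toHomeomorph).trans
    (Homeomorph.setCongr (phiL_range J))

lemma sliceHomeo_val {n d : ℕ} (hn : 1 ≤ n) {J : EndE n} (hJ : J ∈ CS n) (z : Fin d → ℝ × ℝ) :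
    (sliceHomeo hn hJ z : Fin d → EndE n) = phiL n d J z := rfl

lemma preconn_subset_pathComponentIn {X : Type*} [TopologicalSpace X] [LocallyPathConnectedSpace X]
    {S Vo : Set X} (hS : IsPreconnected S) (hV : IsOpen Vo) (hSV : S ⊆ Vo) {b : X} (hb : b ∈ S) :
    S ⊆ pathComponentIn Vo b := by
  set u := pathComponentIn Vo b with hu
  set v := ⋃ y ∈ Vo \ u, pathComponentIn Vo y with hv
  by_contra hcon
  obtain ⟨z, hzS, hzu⟩ := Set.not_subset.1 hcon
  have hSuv : S ⊆ u ∪ v := by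
    intro y hy
    by_cases hyu : y ∈ u
    · exact Or.inl hyu
    · exact Or.inr (Set.mem_biUnion ⟨hSV hy, hyu⟩ (mem_pathComponentIn_self (hSV hy)))
  have huv : u ∩ v ∩ S = ∅ := by
    rw [Set.eq_empty_iff_forall_notMem]
    rintro w ⟨⟨hwu, hwv⟩, -⟩
    obtain ⟨y, ⟨hyV, hyu⟩, hwy⟩ := Set.mem_iUnion₂.1 hwv
    exact hyu (by
      rw [hu, ← pathComponentIn_congr hwu, pathComponentIn_congr hwy]
      exact mem_pathComponentIn_self hyV)
  have hvo : IsOpen v := isOpen_biUnion fun y _ => hV.pathComponentIn y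
  have := hS u v (hV.pathComponentIn b) hvo hSuv
    ⟨b, hb, mem_pathComponentIn_self (hSV hb)⟩
    ⟨z, hzS, (hSuv hzS).resolve_left hzu⟩
  obtain ⟨w, hwS, hwuv⟩ := this
  rw [Set.eq_empty_iff_forall_notMem] at huv
  exact huv w ⟨hwuv, hwS⟩

lemma joinedIn_phi_iff {n d : ℕ} (hn : 1 ≤ n) {J : EndE n} (hJ : J ∈ CS n)
    (Ω : Set (Fin d → EndE n)) (a b : Fin d → ℝ × ℝ) :
    JoinedIn ((phiL n d J) ⁻¹' Ω) a b ↔ JoinedIn (Ω ∩ CId n d J) (phiL n d J a) (phiL n d J b) := by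
  have hcont : Continuous (phiL n d J) := (phiL_isClosedEmbedding hn hJ).continuous
  constructor
  · rintro ⟨γ, hγ⟩
    refine ⟨γ.map hcont, fun t => ⟨hγ t, ?_⟩⟩
    rw [← phiL_range J]
    exact ⟨γ t, by simp⟩
  · rintro ⟨γ, hγ⟩
    have hmem : ∀ t, γ t ∈ CId n d J := fun t => (hγ t).2
    have hrange : ∀ z : Fin d → ℝ × ℝ, phiL n d J z ∈ CId n d J := by
      intro z; rw [← phiL_range]; exact ⟨z, rfl⟩
    set e := sliceHomeo (d := d) hn hJ with he
    have hval : ∀ u : CId n d J, phiL n d J (e.symm u) = u.1 := by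
      intro u
      have h0 : e (e.symm u) = u := e.apply_symm_apply u
      calc phiL n d J (e.symm u) = (e (e.symm u)).1 := (sliceHomeo_val hn hJ _).symm
        _ = u.1 := by rw [h0]
    have hea : e.symm ⟨phiL n d J a, hrange a⟩ = a := by
      have h1 : (⟨phiL n d J a, hrange a⟩ : CId n d J) = e a :=
        Subtype.ext (sliceHomeo_val hn hJ a).symm
      rw [h1, e.symm_apply_apply]
    have heb : e.symm ⟨phiL n d J b, hrange b⟩ = b := by
      have h1 : (⟨phiL n d J b, hrange b⟩ : CId n d J) = e b :=
        Subtype.ext (sliceHomeo_val hn hJ b).symm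
      rw [h1, e.symm_apply_apply]
    let δ : Path (⟨phiL n d J a, hrange a⟩ : CId n d J) ⟨phiL n d J b, hrange b⟩ :=
      { toFun := fun t => ⟨γ t, hmem t⟩
        continuous_toFun := γ.continuous.subtype_mk _
        source' := Subtype.ext γ.source
        target' := Subtype.ext γ.target }
    refine ⟨(δ.map e.symm.continuous).cast hea.symm heb.symm, fun t => ?_⟩
    have h2 : ((δ.map e.symm.continuous).cast hea.symm heb.symm) t
        = e.symm ⟨γ t, hmem t⟩ := by
      simp [Path.cast, Path.map, Path.map', δ]
    rw [Set.mem_preimage, h2, hval ⟨γ t, hmem t⟩]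
    exact (hγ t).1

lemma preimage_phi_open {n d : ℕ} (hn : 1 ≤ n) {J : EndE n} (hJ : J ∈ CS n)
    {U Ω : Set (Fin d → EndE n)} (hU : IsOpen U) (heq : Ω ∩ CId n d J = U ∩ CId n d J) :
    IsOpen ((phiL n d J) ⁻¹' Ω) := by
  have hrange : ∀ z : Fin d → ℝ × ℝ, phiL n d J z ∈ CId n d J := by
    intro z; rw [← phiL_range]; exact ⟨z, rfl⟩
  have h1 : (phiL n d J) ⁻¹' Ω = (phiL n d J) ⁻¹' U := by
    ext z
    constructor
    · intro hz
      have : phiL n d J z ∈ Ω ∩ CId n d J := ⟨hz, hrange z⟩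
      rw [heq] at this
      exact this.1
    · intro hz
      have : phiL n d J z ∈ U ∩ CId n d J := ⟨hz, hrange z⟩
      rw [← heq] at this
      exact this.1
  rw [h1]
  exact hU.preimage (phiL_isClosedEmbedding hn hJ).continuous

lemma seed_joined {n d : ℕ} (hn : 1 ≤ n) {J : EndE n} (hJ : J ∈ CS n)
    {U Ω : Set (Fin d → EndE n)} (hU : IsOpen U) (heq : Ω ∩ CId n d J = U ∩ CId n d J)
    (hrc : IsPreconnected (Ω ∩ RealSet n d)) {p x : Fin d → EndE n}
    (hp : p ∈ Ω ∩ RealSet n d) (hx : x ∈ Ω ∩ RealSet n d) :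
    JoinedIn (Ω ∩ CId n d J) p x := by
  have hVopen : IsOpen ((phiL n d J) ⁻¹' Ω) := preimage_phi_open hn hJ hU heq
  set S : Set (Fin d → ℝ × ℝ) := (phiL n d J) ⁻¹' (Ω ∩ RealSet n d) with hS
  have hsub : Ω ∩ RealSet n d ⊆ Set.range (phiL n d J) := by
    rw [phiL_range]
    exact fun w hw => realSet_subset_CId J hw.2
  have hSpre : IsPreconnected S := by
    have himg : phiL n d J '' S = Ω ∩ RealSet n d := by
      rw [hS, Set.image_preimage_eq_inter_range, Set.inter_eq_left.2 hsub]
    exact ((phiL_isClosedEmbedding hn hJ).toIsEmbedding.toIsInducing.isPreconnected_image).1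
      (himg ▸ hrc)
  obtain ⟨a, ha⟩ : p ∈ Set.range (phiL n d J) := hsub hp
  obtain ⟨b, hb⟩ : x ∈ Set.range (phiL n d J) := hsub hx
  have haS : a ∈ S := by rw [hS, Set.mem_preimage, ha]; exact hp
  have hbS : b ∈ S := by rw [hS, Set.mem_preimage, hb]; exact hx
  have hSV : S ⊆ (phiL n d J) ⁻¹' Ω := fun z hz => hz.1
  have := preconn_subset_pathComponentIn hSpre hVopen hSV hbS haS
  have hJoined : JoinedIn ((phiL n d J) ⁻¹' Ω) a b := this.symm
  rw [joinedIn_phi_iff hn hJ, ha, hb] at hJoined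
  exact hJoined

lemma satur_open {n d : ℕ} (hn : 1 ≤ n) {𝒞 : Set (EndE n)} (hcs : 𝒞 ⊆ CS n)
    {Ω S : Set (Fin d → EndE n)} (hso : SliceOpen n d 𝒞 Ω) (hSΩ : S ⊆ Ω)
    (hsat : ∀ J ∈ 𝒞, ∀ p p', JoinedIn (Ω ∩ CId n d J) p p' → p ∈ S → p' ∈ S) :
    @IsOpen _ (sliceTop n d 𝒞) S := by
  unfold sliceTop
  refine isOpen_iSup_iff.2 fun J => isOpen_iSup_iff.2 fun hJ𝒞 => isOpen_coinduced.2 ?_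
  have hJ : J ∈ CS n := hcs hJ𝒞
  rw [← (sliceHomeo (d := d) hn hJ).isOpen_preimage]
  have hpre : (sliceHomeo (d := d) hn hJ) ⁻¹' (Subtype.val ⁻¹' S) = (phiL n d J) ⁻¹' S := by
    ext z
    simp only [Set.mem_preimage]
    rw [sliceHomeo_val hn hJ]
  rw [hpre]
  obtain ⟨U, hU, hUeq⟩ := hso.2 J hJ𝒞
  have hVopen : IsOpen ((phiL n d J) ⁻¹' Ω) := preimage_phi_open hn hJ hU hUeq
  rw [isOpen_iff_forall_mem_open]
  intro z hz
  refine ⟨pathComponentIn ((phiL n d J) ⁻¹' Ω) z, ?_, hVopen.pathComponentIn z, ?_⟩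
  · intro w hw
    have hjw : JoinedIn ((phiL n d J) ⁻¹' Ω) z w := hw
    rw [joinedIn_phi_iff hn hJ] at hjw
    exact hsat J hJ𝒞 _ _ hjw hz
  · exact mem_pathComponentIn_self (hSΩ hz)

lemma absorb {n d : ℕ} (hn : 1 ≤ n) {𝒞 : Set (EndE n)} (hcs : 𝒞 ⊆ CS n)
    {Ω : Set (Fin d → EndE n)} (hso : SliceOpen n d 𝒞 Ω)
    (hrc : IsPreconnected (Ω ∩ RealSet n d)) {x : Fin d → EndE n}
    (hx : x ∈ Ω ∩ RealSet n d) {J : EndE n} (hJ𝒞 : J ∈ 𝒞) {p p' : Fin d → EndE n}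
    (hpp' : JoinedIn (Ω ∩ CId n d J) p p')
    (hp : ∃ I ∈ 𝒞, JoinedIn (Ω ∩ CId n d I) p x) :
    ∃ I ∈ 𝒞, JoinedIn (Ω ∩ CId n d I) p' x := by
  obtain ⟨I, hI𝒞, hpx⟩ := hp
  by_cases hpr : p ∈ RealSet n d
  · obtain ⟨U, hU, hUeq⟩ := hso.2 J hJ𝒞
    have hseed : JoinedIn (Ω ∩ CId n d J) p x :=
      seed_joined hn (hcs hJ𝒞) hU hUeq hrc ⟨hpp'.source_mem.1, hpr⟩ hx
    exact ⟨J, hJ𝒞, hpp'.symm.trans hseed⟩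
  · obtain ⟨ℓ, hℓ⟩ : ∃ ℓ, ¬∃ xr : ℝ, p ℓ = xr • (1 : EndE n) := by
      by_contra hc
      push_neg at hc
      exact hpr hc
    have hCI : CI I = CI J :=
      slice_coincide hn (hcs hI𝒞) (hcs hJ𝒞) (hpx.source_mem.2 ℓ) (hpp'.source_mem.2 ℓ) hℓ
    have hCId : CId n d I = CId n d J := CId_congr hCI
    rw [hCId] at hpx
    exact ⟨J, hJ𝒞, hpp'.symm.trans hpx⟩

/-- In a real-connected slice-domain meeting the reals, each point can be joined to each
real point by a continuous path (w.r.t. the Euclidean topology) lying on a single slice. -/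
theorem path_on_slice_to_real_point (n d : ℕ) (hn : 1 ≤ n) (hd : 1 ≤ d)
    (𝒞 : Set (EndE n)) (h𝒞 : 𝒞.Nonempty) (hsym : ∀ I ∈ 𝒞, -I ∈ 𝒞) (hcs : 𝒞 ⊆ CS n)
    (Ω : Set (Fin d → EndE n)) (hΩ : SliceDomain n d 𝒞 Ω) (hrc : RealConnected n d Ω)
    (hreal : (Ω ∩ RealSet n d).Nonempty) :
    ∀ q ∈ Ω, ∀ x ∈ Ω ∩ RealSet n d,
      ∃ I ∈ 𝒞, ∃ γ : ℝ → Fin d → EndE n,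
        ContinuousOn γ (Set.Icc 0 1) ∧ γ 0 = q ∧ γ 1 = x ∧
        ∀ t ∈ Set.Icc (0:ℝ) 1, γ t ∈ Ω ∩ CId n d I := by
  intro q hq x hx
  obtain ⟨hso, hconn⟩ := hΩ
  have hrc' : IsPreconnected (Ω ∩ RealSet n d) := hrc
  set A : Set (Fin d → EndE n) :=
    {p | p ∈ Ω ∧ ∃ J ∈ 𝒞, JoinedIn (Ω ∩ CId n d J) p x} with hA
  suffices hqA : q ∈ A by
    obtain ⟨-, I, hI, hjoin⟩ := hqA
    obtain ⟨γ, hγ⟩ := hjoin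
    refine ⟨I, hI, γ.extend, γ.continuous_extend.continuousOn, γ.extend_zero, γ.extend_one, ?_⟩
    intro t ht
    rw [γ.extend_apply ht]
    exact hγ _
  -- x ∈ A
  have hxA : x ∈ A := by
    obtain ⟨J, hJ𝒞, hxJ⟩ := Set.mem_iUnion₂.1 (hso.1 hx.1)
    exact ⟨hx.1, J, hJ𝒞, JoinedIn.refl ⟨hx.1, hxJ⟩⟩
  have hAΩ : A ⊆ Ω := fun p hp => hp.1
  have hAopen : @IsOpen _ (sliceTop n d 𝒞) A := by
    refine satur_open hn hcs hso hAΩ fun J hJ𝒞 p p' hpp' hpA => ?_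
    exact ⟨hpp'.target_mem.1, absorb hn hcs hso hrc' hx hJ𝒞 hpp' hpA.2⟩
  set B : Set (Fin d → EndE n) := Ω \ A with hB
  have hBopen : @IsOpen _ (sliceTop n d 𝒞) B := by
    refine satur_open hn hcs hso (fun p hp => hp.1) fun J hJ𝒞 p p' hpp' hpB => ?_
    refine ⟨hpp'.target_mem.1, fun hp'A => hpB.2 ?_⟩
    exact ⟨hpp'.source_mem.1, absorb hn hcs hso hrc' hx hJ𝒞 hpp'.symm hp'A.2⟩
  by_contra hqA
  have hqB : q ∈ B := ⟨hq, hqA⟩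
  obtain ⟨w, hwΩ, hwA, hwB⟩ := hconn.2 A B hAopen hBopen
    (fun p hp => (em (p ∈ A)).imp id fun h => ⟨hp, h⟩)
    ⟨x, hx.1, hxA⟩ ⟨q, hq, hqB⟩
  exact hwB.2 hwA
end
end

section
/- The topological space (W, τ_s) is connected, path-connected, and locally path-connected; in particular, any two points of W can be joined by a path that is continuous with respect to τ_s. -/
noncomputable section

-- L1
lemma cont_val {n d : ℕ} {𝒞 : Set (EndE n)} {I : EndE n} (hI : I ∈ 𝒞) :
    @Continuous (CId n d I) (Fin d → EndE n) _ (sliceTop n d 𝒞) Subtype.val := by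
  rw [continuous_iff_coinduced_le]
  exact le_iSup₂ (f := fun J (_ : J ∈ 𝒞) =>
    TopologicalSpace.coinduced (Subtype.val : CId n d J → Fin d → EndE n) inferInstance) I hI

-- L2
lemma isOpen_sliceTop_iff {n d : ℕ} {𝒞 : Set (EndE n)} {s : Set (Fin d → EndE n)} :
    @IsOpen _ (sliceTop n d 𝒞) s ↔
      ∀ I ∈ 𝒞, ∃ O : Set (Fin d → EndE n), IsOpen O ∧ s ∩ CId n d I = O ∩ CId n d I := by
  have h : @IsOpen _ (sliceTop n d 𝒞) s ↔ ∀ I ∈ 𝒞,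
      IsOpen ((Subtype.val : CId n d I → Fin d → EndE n) ⁻¹' s) := by
    rw [show sliceTop n d 𝒞 = ⨆ I, ⨆ _ : I ∈ 𝒞,
      TopologicalSpace.coinduced (Subtype.val : CId n d I → Fin d → EndE n) inferInstance
      from rfl]
    simp only [isOpen_iSup_iff, isOpen_coinduced]
  rw [h]
  refine forall₂_congr fun I hI => ?_
  rw [show (instTopologicalSpaceSubtype : TopologicalSpace (CId n d I)) =
    TopologicalSpace.induced Subtype.val inferInstance from rfl, isOpen_induced_iff]
  constructor
  · rintro ⟨O, hO, hpre⟩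
    have h2 := Subtype.preimage_coe_eq_preimage_coe_iff.mp hpre
    exact ⟨O, hO, by rw [Set.inter_comm s, ← h2, Set.inter_comm]⟩
  · rintro ⟨O, hO, heq⟩
    refine ⟨O, hO, Subtype.preimage_coe_eq_preimage_coe_iff.mpr ?_⟩
    rw [Set.inter_comm _ O, ← heq, Set.inter_comm]

-- Convexity of a slice
lemma convex_CId {n d : ℕ} (I : EndE n) : Convex ℝ (CId n d I) := by
  rintro q hq q' hq' a b ha hb hab ℓ
  obtain ⟨x, y, hxy⟩ := hq ℓ
  obtain ⟨x', y', hxy'⟩ := hq' ℓ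
  refine ⟨a * x + b * x', a * y + b * y', ?_⟩
  simp only [Pi.add_apply, Pi.smul_apply, hxy, hxy']
  module

-- Segment path
lemma joinedIn_segment {n d : ℕ} {𝒞 : Set (EndE n)} {I : EndE n} (hI : I ∈ 𝒞)
    {s : Set (Fin d → EndE n)} (hconv : Convex ℝ s) (hsub : s ⊆ CId n d I)
    {a b : Fin d → EndE n} (ha : a ∈ s) (hb : b ∈ s) :
    @JoinedIn _ (sliceTop n d 𝒞) s a b := by
  have hmem : ∀ t : unitInterval, ((1:ℝ) - (t:ℝ)) • a + (t:ℝ) • b ∈ s := fun t =>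
    hconv ha hb (by linarith [t.2.2]) t.2.1 (by ring)
  let g : unitInterval → CId n d I := fun t => ⟨((1:ℝ) - (t:ℝ)) • a + (t:ℝ) • b, hsub (hmem t)⟩
  have hg : Continuous g := by
    apply Continuous.subtype_mk
    fun_prop
  have hcont : @Continuous unitInterval (Fin d → EndE n) _ (sliceTop n d 𝒞)
      (fun t => ((1:ℝ) - (t:ℝ)) • a + (t:ℝ) • b) := by
    exact @Continuous.comp unitInterval (CId n d I) (Fin d → EndE n) _ _ (sliceTop n d 𝒞)
      g Subtype.val (cont_val hI) hg
  refine ⟨@Path.mk _ (sliceTop n d 𝒞) a b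
    (@ContinuousMap.mk _ _ _ (sliceTop n d 𝒞) (fun t => ((1:ℝ) - (t:ℝ)) • a + (t:ℝ) • b) hcont)
    ?_ ?_, fun t => hmem t⟩
  · show ((1:ℝ) - ((0:unitInterval):ℝ)) • a + ((0:unitInterval):ℝ) • b = a
    rw [show ((0:unitInterval):ℝ) = 0 from rfl]
    module
  · show ((1:ℝ) - ((1:unitInterval):ℝ)) • a + ((1:unitInterval):ℝ) • b = b
    rw [show ((1:unitInterval):ℝ) = 1 from rfl]
    module

lemma CId_subset_Wcone {n d : ℕ} {𝒞 : Set (EndE n)} {I : EndE n} (hI : I ∈ 𝒞) :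
    CId n d I ⊆ Wcone n d 𝒞 :=
  Set.subset_iUnion₂ (s := fun J (_ : J ∈ 𝒞) => CId n d J) I hI

lemma zero_mem_CId {n d : ℕ} (I : EndE n) : (0 : Fin d → EndE n) ∈ CId n d I :=
  fun _ => ⟨0, 0, by simp only [Pi.zero_apply]; module⟩

lemma isPathConnected_Wcone {n d : ℕ} {𝒞 : Set (EndE n)} (h𝒞 : 𝒞.Nonempty) :
    @IsPathConnected _ (sliceTop n d 𝒞) (Wcone n d 𝒞) := by
  obtain ⟨I₀, hI₀⟩ := h𝒞
  refine ⟨0, Set.mem_iUnion₂.mpr ⟨I₀, hI₀, zero_mem_CId I₀⟩, ?_⟩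
  intro q hq
  obtain ⟨I, hI, hqI⟩ := Set.mem_iUnion₂.mp hq
  have h1 : @JoinedIn _ (sliceTop n d 𝒞) (CId n d I) 0 q :=
    joinedIn_segment hI (convex_CId I) subset_rfl (zero_mem_CId I) hqI
  exact @JoinedIn.mono _ (sliceTop n d 𝒞) _ _ _ _ h1 (CId_subset_Wcone hI)

lemma isOpen_Wcone {n d : ℕ} {𝒞 : Set (EndE n)} :
    @IsOpen _ (sliceTop n d 𝒞) (Wcone n d 𝒞) :=
  isOpen_sliceTop_iff.mpr fun I hI => ⟨Set.univ, isOpen_univ, by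
    rw [Set.univ_inter, Set.inter_eq_right.mpr (CId_subset_Wcone hI)]⟩

lemma isOpen_pathComponentIn_sliceTop {n d : ℕ} {𝒞 : Set (EndE n)}
    {u : Set (Fin d → EndE n)} (hu : @IsOpen _ (sliceTop n d 𝒞) u) (p : Fin d → EndE n) :
    @IsOpen _ (sliceTop n d 𝒞) (@pathComponentIn _ (sliceTop n d 𝒞) u p) := by
  set P := @pathComponentIn _ (sliceTop n d 𝒞) u p with hP
  rw [isOpen_sliceTop_iff] at hu ⊢
  intro K hK
  obtain ⟨U, hUopen, hUeq⟩ := hu K hK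
  refine ⟨{m | ∃ r ∈ P ∩ CId n d K, ∃ ε : ℝ, 0 < ε ∧ Metric.ball r ε ∩ CId n d K ⊆ u ∧
    m ∈ Metric.ball r ε}, ?_, ?_⟩
  · rw [isOpen_iff_forall_mem_open]
    rintro m ⟨r, hr, ε, hε, hsub, hm⟩
    exact ⟨Metric.ball r ε, fun m' hm' => ⟨r, hr, ε, hε, hsub, hm'⟩, Metric.isOpen_ball, hm⟩
  · apply Set.Subset.antisymm
    · rintro m ⟨hmP, hmK⟩
      have hmu : m ∈ u := @pathComponentIn_subset _ (sliceTop n d 𝒞) p u m hmP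
      have hmU : m ∈ U := by
        have h2 : m ∈ u ∩ CId n d K := ⟨hmu, hmK⟩
        rw [hUeq] at h2
        exact h2.1
      obtain ⟨ε, hε, hball⟩ := Metric.isOpen_iff.mp hUopen m hmU
      refine ⟨⟨m, ⟨hmP, hmK⟩, ε, hε, ?_, Metric.mem_ball_self hε⟩, hmK⟩
      intro z hz
      have h3 : z ∈ U ∩ CId n d K := ⟨hball hz.1, hz.2⟩
      rw [← hUeq] at h3
      exact h3.1
    · rintro m ⟨⟨r, ⟨hrP, hrK⟩, ε, hε, hsub, hm⟩, hmK⟩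
      have hconv : Convex ℝ (Metric.ball r ε ∩ CId n d K) :=
        (convex_ball r ε).inter (convex_CId K)
      have hj : @JoinedIn _ (sliceTop n d 𝒞) (Metric.ball r ε ∩ CId n d K) r m :=
        joinedIn_segment hK hconv Set.inter_subset_right
          ⟨Metric.mem_ball_self hε, hrK⟩ ⟨hm, hmK⟩
      have hj2 : @JoinedIn _ (sliceTop n d 𝒞) u r m :=
        @JoinedIn.mono _ (sliceTop n d 𝒞) _ _ _ _ hj hsub
      exact ⟨@JoinedIn.trans _ (sliceTop n d 𝒞) _ _ _ _ hrP hj2, hmK⟩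


/-- (W, τ_s) is connected, path-connected and locally path-connected. -/
theorem sliceTop_connected_pathConnected_locPathConnected (n d : ℕ) (hn : 1 ≤ n) (hd : 1 ≤ d)
    (𝒞 : Set (EndE n)) (h𝒞 : 𝒞.Nonempty) (hsym : ∀ I ∈ 𝒞, -I ∈ 𝒞) (hcs : 𝒞 ⊆ CS n) :
    @IsConnected _ (sliceTop n d 𝒞) (Wcone n d 𝒞) ∧
    @IsPathConnected _ (sliceTop n d 𝒞) (Wcone n d 𝒞) ∧
    @LocPathConnectedSpace {q // q ∈ Wcone n d 𝒞}
      (TopologicalSpace.induced Subtype.val (sliceTop n d 𝒞)) := by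
  have hpc := isPathConnected_Wcone (n := n) (d := d) h𝒞
  have hconn : @IsConnected _ (sliceTop n d 𝒞) (Wcone n d 𝒞) :=
    @IsPathConnected.isConnected _ (sliceTop n d 𝒞) _ hpc
  have hloc : @LocPathConnectedSpace _ (sliceTop n d 𝒞) :=
    (@locPathConnectedSpace_iff_isOpen_pathComponentIn _ (sliceTop n d 𝒞)).mpr
      (fun x u hu => isOpen_pathComponentIn_sliceTop hu x)
  exact ⟨hconn, hpc,
    @IsOpen.locPathConnectedSpace _ (sliceTop n d 𝒞) hloc _ isOpen_Wcone⟩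
end
end

section
/- (Splitting Lemma) Let Ω be a slice-open set in W and f : Ω → ℝ^{2n}. Then f is weak slice regular if and only if for every I ∈ 𝒞 and every I-basis {ξ₁, …, ξ_n} of ℝ^{2n} there exist functions G₁, …, G_n : Φ_I⁻¹(Ω) → ℂ_I such that: each G_ℓ is Fréchet (real) differentiable on Φ_I⁻¹(Ω) and satisfies ∂G_ℓ/∂x_m + I ∘ (∂G_ℓ/∂y_m) = 0 on Φ_I⁻¹(Ω) for every m = 1, …, d (composition taken in End(ℝ^{2n})), and f(Φ_I(x,y)) = Σ_{ℓ=1}^n G_ℓ(x,y)(ξ_ℓ) for all (x,y) ∈ Φ_I⁻¹(Ω), where G_ℓ(x,y)(ξ_ℓ) denotes the operator G_ℓ(x,y) ∈ ℂ_I applied to the vector ξ_ℓ. -/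
noncomputable section

/-- Φ_I : ℝ^d × ℝ^d → [End(ℝ^{2n})]^d, (x, y) ↦ (x₁·id + y₁·I, …, x_d·id + y_d·I). -/
def Phi (n d : ℕ) (I : EndE n) : (Fin d → ℝ) × (Fin d → ℝ) → Fin d → EndE n :=
  fun p ℓ => p.1 ℓ • (1 : EndE n) + p.2 ℓ • I

/-- The standard basis direction in the x-coordinates. -/
def ex (d : ℕ) (ℓ : Fin d) : (Fin d → ℝ) × (Fin d → ℝ) := (Pi.single ℓ 1, 0)

/-- The standard basis direction in the y-coordinates. -/
def ey (d : ℕ) (ℓ : Fin d) : (Fin d → ℝ) × (Fin d → ℝ) := (0, Pi.single ℓ 1)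

/-- f is weak slice regular on Ω: for every I ∈ 𝒞, f ∘ Φ_I is (Fréchet, real)
differentiable on Φ_I⁻¹(Ω) and satisfies the Cauchy–Riemann equations
∂(f∘Φ_I)/∂x_ℓ + I(∂(f∘Φ_I)/∂y_ℓ) = 0 there, for ℓ = 1, …, d. -/
def WSRegular (n d : ℕ) (𝒞 : Set (EndE n)) (Ω : Set (Fin d → EndE n))
    (f : (Fin d → EndE n) → V n) : Prop :=
  ∀ I ∈ 𝒞, DifferentiableOn ℝ (f ∘ Phi n d I) (Phi n d I ⁻¹' Ω) ∧
    ∀ p ∈ Phi n d I ⁻¹' Ω, ∀ ℓ : Fin d,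
      fderiv ℝ (f ∘ Phi n d I) p (ex d ℓ) + I (fderiv ℝ (f ∘ Phi n d I) p (ey d ℓ)) = 0

section Aux
variable {n d : ℕ}

lemma phi_continuous (I : EndE n) : Continuous (Phi n d I) := by
  apply continuous_pi
  intro ℓ
  exact (((continuous_apply ℓ).comp continuous_fst).smul continuous_const).add
    (((continuous_apply ℓ).comp continuous_snd).smul continuous_const)

lemma phi_mem_CId (I : EndE n) (p : (Fin d → ℝ) × (Fin d → ℝ)) : Phi n d I p ∈ CId n d I :=
  fun ℓ => ⟨p.1 ℓ, p.2 ℓ, rfl⟩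

lemma preimage_isOpen {𝒞 : Set (EndE n)} {Ω : Set (Fin d → EndE n)}
    (hΩ : SliceOpen n d 𝒞 Ω) {I : EndE n} (hI : I ∈ 𝒞) :
    IsOpen (Phi n d I ⁻¹' Ω) := by
  obtain ⟨U, hU, hUe⟩ := hΩ.2 I hI
  have he : Phi n d I ⁻¹' Ω = Phi n d I ⁻¹' U := by
    ext p
    constructor
    · intro hp
      have h1 : Phi n d I p ∈ Ω ∩ CId n d I := ⟨hp, phi_mem_CId I p⟩
      rw [hUe] at h1
      exact h1.1
    · intro hp
      have h1 : Phi n d I p ∈ U ∩ CId n d I := ⟨hp, phi_mem_CId I p⟩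
      rw [← hUe] at h1
      exact h1.1
  rw [he]
  exact hU.preimage (phi_continuous I)

end Aux

lemma exists_Ibasis (n : ℕ) (I : EndE n) (hI : I * I = -1) :
    ∃ ξ : Fin n → V n, LinearIndependent ℝ (Sum.elim ξ fun j => I (ξ j)) ∧
      Submodule.span ℝ (Set.range (Sum.elim ξ fun j => I (ξ j))) = ⊤ := by
  have hII : ∀ v : V n, I (I v) = -v := by
    intro v
    have h1 : (I * I) v = (-1 : EndE n) v := by rw [hI]
    simpa using h1
  letI smulC : SMul ℂ (V n) := ⟨fun z v => z.re • v + z.im • I v⟩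
  have smul_def : ∀ (z : ℂ) (v : V n), z • v = z.re • v + z.im • I v := fun _ _ => rfl
  letI modC : Module ℂ (V n) := Module.ofMinimalAxioms
    (fun z u v => by simp only [smul_def, map_add, smul_add]; abel)
    (fun z w v => by simp only [smul_def, Complex.add_re, Complex.add_im, add_smul]; abel)
    (fun z w v => by
      simp only [smul_def, map_add, map_smul, hII, Complex.mul_re, Complex.mul_im,
        sub_smul, add_smul, smul_add, smul_smul, smul_neg]
      abel)
    (fun v => by simp [smul_def])
  letI : IsScalarTower ℝ ℂ (V n) := ⟨fun r z v => by
    simp [smul_def, Complex.smul_re, Complex.smul_im, smul_add, smul_smul]⟩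
  haveI : Module.Finite ℂ (V n) := Module.Finite.of_restrictScalars_finite ℝ ℂ (V n)
  have hrank : Module.finrank ℂ (V n) = n := by
    have h2 : Module.finrank ℝ ℂ * Module.finrank ℂ (V n) = Module.finrank ℝ (V n) :=
      Module.finrank_mul_finrank ℝ ℂ (V n)
    rw [Complex.finrank_real_complex, finrank_euclideanSpace_fin] at h2
    omega
  let cb : Module.Basis (Fin n) ℂ (V n) := (Module.finBasis ℂ (V n)).reindex (finCongr hrank)
  let B2 : Module.Basis (Fin 2 × Fin n) ℝ (V n) := Complex.basisOneI.smulTower cb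
  let e : Fin 2 × Fin n ≃ (Fin n ⊕ Fin n) :=
    (finTwoEquiv.prodCongr (Equiv.refl (Fin n))).trans (Equiv.boolProdEquivSum (Fin n))
  let B3 : Module.Basis (Fin n ⊕ Fin n) ℝ (V n) := B2.reindex e
  refine ⟨fun j => cb j, ?_, ?_⟩
  · have hcoe : ⇑B3 = Sum.elim (fun j => cb j) (fun j => I (cb j)) := by
      funext i
      cases i with
      | inl j =>
        have he : e.symm (Sum.inl j) = ((0 : Fin 2), j) := rfl
        show B3 (Sum.inl j) = cb j
        rw [show B3 (Sum.inl j) = B2 (e.symm (Sum.inl j)) from B2.reindex_apply e _, he,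
          Module.Basis.smulTower_apply]
        simp [Complex.coe_basisOneI, smul_def]
      | inr j =>
        have he : e.symm (Sum.inr j) = ((1 : Fin 2), j) := rfl
        show B3 (Sum.inr j) = I (cb j)
        rw [show B3 (Sum.inr j) = B2 (e.symm (Sum.inr j)) from B2.reindex_apply e _, he,
          Module.Basis.smulTower_apply]
        simp [Complex.coe_basisOneI, smul_def]
    exact hcoe ▸ B3.linearIndependent
  · have hcoe : ⇑B3 = Sum.elim (fun j => cb j) (fun j => I (cb j)) := by
      funext i
      cases i with
      | inl j =>
        have he : e.symm (Sum.inl j) = ((0 : Fin 2), j) := rfl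
        show B3 (Sum.inl j) = cb j
        rw [show B3 (Sum.inl j) = B2 (e.symm (Sum.inl j)) from B2.reindex_apply e _, he,
          Module.Basis.smulTower_apply]
        simp [Complex.coe_basisOneI, smul_def]
      | inr j =>
        have he : e.symm (Sum.inr j) = ((1 : Fin 2), j) := rfl
        show B3 (Sum.inr j) = I (cb j)
        rw [show B3 (Sum.inr j) = B2 (e.symm (Sum.inr j)) from B2.reindex_apply e _, he,
          Module.Basis.smulTower_apply]
        simp [Complex.coe_basisOneI, smul_def]
    exact hcoe ▸ B3.span_eq


/-- (Splitting Lemma) f is weak slice regular iff for every I ∈ 𝒞 and every I-basis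
ξ₁, …, ξ_n of ℝ^{2n} there are ℂ_I-valued holomorphic components G₁, …, G_n with
f ∘ Φ_I = Σ_ℓ G_ℓ(·)(ξ_ℓ) on Φ_I⁻¹(Ω). -/
theorem splitting_lemma (n d : ℕ) (hn : 1 ≤ n) (hd : 1 ≤ d)
    (𝒞 : Set (EndE n)) (h𝒞 : 𝒞.Nonempty) (hsym : ∀ I ∈ 𝒞, -I ∈ 𝒞) (hcs : 𝒞 ⊆ CS n)
    (Ω : Set (Fin d → EndE n)) (hΩ : SliceOpen n d 𝒞 Ω)
    (f : (Fin d → EndE n) → V n) :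
    WSRegular n d 𝒞 Ω f ↔
      ∀ I ∈ 𝒞, ∀ ξ : Fin n → V n,
        (LinearIndependent ℝ (Sum.elim ξ fun j => I (ξ j)) ∧
          Submodule.span ℝ (Set.range (Sum.elim ξ fun j => I (ξ j))) = ⊤) →
        ∃ G : Fin n → ((Fin d → ℝ) × (Fin d → ℝ)) → EndE n,
          (∀ ℓ : Fin n, ∀ p ∈ Phi n d I ⁻¹' Ω, G ℓ p ∈ CI I) ∧
          (∀ ℓ : Fin n, DifferentiableOn ℝ (G ℓ) (Phi n d I ⁻¹' Ω)) ∧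
          (∀ ℓ : Fin n, ∀ p ∈ Phi n d I ⁻¹' Ω, ∀ m : Fin d,
            fderiv ℝ (G ℓ) p (ex d m) + I * fderiv ℝ (G ℓ) p (ey d m) = 0) ∧
          (∀ p ∈ Phi n d I ⁻¹' Ω, f (Phi n d I p) = ∑ ℓ : Fin n, (G ℓ p) (ξ ℓ)) := by
  constructor
  · -- forward direction
    intro hreg I hI ξ ⟨hind, hspan⟩
    set S := Phi n d I ⁻¹' Ω with hS
    have hSopen : IsOpen S := preimage_isOpen hΩ hI
    have hI2 : I * I = -1 := hcs hI
    have hII : ∀ v : V n, I (I v) = -v := by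
      intro v
      have h1 : (I * I) v = (-1 : EndE n) v := by rw [hI2]
      simpa using h1
    obtain ⟨hdiff, hCR⟩ := hreg I hI
    let B : Module.Basis (Fin n ⊕ Fin n) ℝ (V n) := Module.Basis.mk hind (le_of_eq hspan.symm)
    have hBl : ∀ j, B (Sum.inl j) = ξ j := fun j => by simp [B]
    have hBr : ∀ j, B (Sum.inr j) = I (ξ j) := fun j => by simp [B]
    -- coordinate identities
    have key1 : ∀ (ℓ : Fin n) (w : V n),
        B.coord (Sum.inl ℓ) (I w) = - B.coord (Sum.inr ℓ) w := by
      intro ℓ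
      have heq : (B.coord (Sum.inl ℓ)).comp (I : V n →ₗ[ℝ] V n) = - B.coord (Sum.inr ℓ) := by
        apply B.ext
        rintro (j | j)
        · have h1 : I (B (Sum.inl j)) = B (Sum.inr j) := by rw [hBl, hBr]
          simp [h1, Module.Basis.coord_apply, Module.Basis.repr_self, Finsupp.single_apply]
        · have h1 : I (B (Sum.inr j)) = -(B (Sum.inl j)) := by rw [hBl, hBr, hII]
          simp [h1, Module.Basis.coord_apply, Module.Basis.repr_self, Finsupp.single_apply]
      intro w
      exact DFunLike.congr_fun heq w
    have key2 : ∀ (ℓ : Fin n) (w : V n),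
        B.coord (Sum.inr ℓ) (I w) = B.coord (Sum.inl ℓ) w := by
      intro ℓ
      have heq : (B.coord (Sum.inr ℓ)).comp (I : V n →ₗ[ℝ] V n) = B.coord (Sum.inl ℓ) := by
        apply B.ext
        rintro (j | j)
        · have h1 : I (B (Sum.inl j)) = B (Sum.inr j) := by rw [hBl, hBr]
          simp [h1, Module.Basis.coord_apply, Module.Basis.repr_self, Finsupp.single_apply]
        · have h1 : I (B (Sum.inr j)) = -(B (Sum.inl j)) := by rw [hBl, hBr, hII]
          simp [h1, Module.Basis.coord_apply, Module.Basis.repr_self, Finsupp.single_apply]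
      intro w
      exact DFunLike.congr_fun heq w
    -- the continuous linear "component extractor"
    let L : Fin n → (V n →L[ℝ] EndE n) := fun ℓ =>
      (LinearMap.toContinuousLinearMap (B.coord (Sum.inl ℓ))).smulRight (1 : EndE n) +
        (LinearMap.toContinuousLinearMap (B.coord (Sum.inr ℓ))).smulRight I
    have hLapp : ∀ (ℓ : Fin n) (w : V n),
        L ℓ w = (B.coord (Sum.inl ℓ) w) • (1 : EndE n) + (B.coord (Sum.inr ℓ) w) • I := by
      intro ℓ w
      simp [L]
    refine ⟨fun ℓ => ⇑(L ℓ) ∘ (f ∘ Phi n d I), ?_, ?_, ?_, ?_⟩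
    · intro ℓ p hp
      exact ⟨_, _, hLapp ℓ _⟩
    · intro ℓ
      exact (L ℓ).differentiable.comp_differentiableOn hdiff
    · intro ℓ p hp m
      have hfd : DifferentiableAt ℝ (f ∘ Phi n d I) p :=
        (hdiff p hp).differentiableAt (hSopen.mem_nhds hp)
      have hGd : HasFDerivAt (⇑(L ℓ) ∘ (f ∘ Phi n d I))
          ((L ℓ).comp (fderiv ℝ (f ∘ Phi n d I) p)) p :=
        ((L ℓ).hasFDerivAt).comp p hfd.hasFDerivAt
      rw [hGd.fderiv]
      set Dx := fderiv ℝ (f ∘ Phi n d I) p (ex d m) with hDxdef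
      set Dy := fderiv ℝ (f ∘ Phi n d I) p (ey d m) with hDydef
      have hDx : Dx = -(I Dy) := by
        have h0 := hCR p hp m
        rw [← hDxdef, ← hDydef] at h0
        exact eq_neg_of_add_eq_zero_left h0
      have ha1 : B.coord (Sum.inl ℓ) Dx = B.coord (Sum.inr ℓ) Dy := by
        rw [hDx, map_neg, key1, neg_neg]
      have ha2 : B.coord (Sum.inr ℓ) Dx = - B.coord (Sum.inl ℓ) Dy := by
        rw [hDx, map_neg, key2]
      have hmul : ∀ (c : ℝ) (A : EndE n), I * c • A = c • (I * A) := by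
        intro c A
        ext v
        simp [ContinuousLinearMap.mul_apply]
      rw [ContinuousLinearMap.comp_apply, ContinuousLinearMap.comp_apply, ← hDxdef, ← hDydef,
        hLapp, hLapp, ha1, ha2, mul_add, hmul, hmul, mul_one, hI2]
      module
    · intro p hp
      have hw := B.sum_repr (f (Phi n d I p))
      rw [Fintype.sum_sum_type] at hw
      calc f (Phi n d I p)
          = ∑ ℓ : Fin n, B.repr (f (Phi n d I p)) (Sum.inl ℓ) • B (Sum.inl ℓ) +
            ∑ ℓ : Fin n, B.repr (f (Phi n d I p)) (Sum.inr ℓ) • B (Sum.inr ℓ) := hw.symm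
        _ = ∑ ℓ : Fin n, (B.repr (f (Phi n d I p)) (Sum.inl ℓ) • B (Sum.inl ℓ) +
            B.repr (f (Phi n d I p)) (Sum.inr ℓ) • B (Sum.inr ℓ)) := by
            rw [Finset.sum_add_distrib]
        _ = ∑ ℓ : Fin n, ((⇑(L ℓ) ∘ (f ∘ Phi n d I)) p) (ξ ℓ) := by
            apply Finset.sum_congr rfl
            intro ℓ _
            rw [hBl, hBr]
            simp [Function.comp, hLapp, Module.Basis.coord_apply]
  · -- converse direction
    intro hsplit I hI
    have hI2 : I * I = -1 := hcs hI
    have hSopen : IsOpen (Phi n d I ⁻¹' Ω) := preimage_isOpen hΩ hI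
    obtain ⟨ξ, hind, hspan⟩ := exists_Ibasis n I hI2
    obtain ⟨G, hGCI, hGdiff, hGCR, hGsum⟩ := hsplit I hI ξ ⟨hind, hspan⟩
    have hgdiff : DifferentiableOn ℝ (fun p => ∑ ℓ : Fin n, (G ℓ p) (ξ ℓ)) (Phi n d I ⁻¹' Ω) := by
      apply DifferentiableOn.fun_sum
      intro ℓ _
      exact (ContinuousLinearMap.apply ℝ (V n) (ξ ℓ)).differentiable.comp_differentiableOn
        (hGdiff ℓ)
    constructor
    · exact hgdiff.congr (fun p hp => hGsum p hp)
    · intro p hp m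
      have hEq : (f ∘ Phi n d I) =ᶠ[nhds p] (fun q => ∑ ℓ : Fin n, (G ℓ q) (ξ ℓ)) :=
        Filter.eventuallyEq_of_mem (hSopen.mem_nhds hp) (fun q hq => hGsum q hq)
      rw [hEq.fderiv_eq]
      have hsum : HasFDerivAt (fun q => ∑ ℓ : Fin n, (G ℓ q) (ξ ℓ))
          (∑ ℓ : Fin n, (ContinuousLinearMap.apply ℝ (V n) (ξ ℓ)).comp (fderiv ℝ (G ℓ) p)) p := by
        apply HasFDerivAt.fun_sum
        intro ℓ _
        exact (ContinuousLinearMap.apply ℝ (V n) (ξ ℓ)).hasFDerivAt.comp p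
          ((hGdiff ℓ p hp).differentiableAt (hSopen.mem_nhds hp)).hasFDerivAt
      rw [hsum.fderiv]
      simp only [ContinuousLinearMap.sum_apply, ContinuousLinearMap.comp_apply,
        ContinuousLinearMap.apply_apply, map_sum]
      rw [← Finset.sum_add_distrib]
      apply Finset.sum_eq_zero
      intro ℓ _
      have h0 := hGCR ℓ p hp m
      have h1 := congrArg (fun (A : EndE n) => A (ξ ℓ)) h0
      simpa [ContinuousLinearMap.mul_apply] using h1
end
end

section
/- (Maximum Modulus Principle) Let Ω be a slice-domain in W and let f : Ω → ℝ^{2n} be weak slice regular. If there exists p ∈ Ω such that |f(q)| ≤ |f(p)| for all q ∈ Ω, where |·| is the Euclidean norm on ℝ^{2n}, then f is constant on Ω, i.e. f ≡ f(p). -/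
noncomputable section

open RealInnerProductSpace Topology

/-! ### Auxiliary machinery -/

/-- `Φ_I` as a continuous linear map. -/
def PhiL (n d : ℕ) (I : EndE n) : ((Fin d → ℝ) × (Fin d → ℝ)) →L[ℝ] (Fin d → EndE n) :=
  ContinuousLinearMap.pi fun ℓ =>
    (((ContinuousLinearMap.proj ℓ).comp (ContinuousLinearMap.fst ℝ _ _)).smulRight (1 : EndE n)) +
    (((ContinuousLinearMap.proj ℓ).comp (ContinuousLinearMap.snd ℝ _ _)).smulRight I)

lemma phiL_eq (n d : ℕ) (I : EndE n) : ⇑(PhiL n d I) = Phi n d I := rfl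

/-- `ℂ^d → ℝ^d × ℝ^d`. -/
def iotaL (d : ℕ) : (Fin d → ℂ) →L[ℝ] (Fin d → ℝ) × (Fin d → ℝ) :=
  (ContinuousLinearMap.pi fun ℓ => Complex.reCLM.comp (ContinuousLinearMap.proj ℓ)).prod
  (ContinuousLinearMap.pi fun ℓ => Complex.imCLM.comp (ContinuousLinearMap.proj ℓ))

/-- The parametrization of the slice `ℂ_I^d` by `ℂ^d`. -/
def Psi (n d : ℕ) (I : EndE n) : (Fin d → ℂ) →L[ℝ] (Fin d → EndE n) :=
  (PhiL n d I).comp (iotaL d)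

lemma psi_eq (n d : ℕ) (I : EndE n) : ⇑(Psi n d I) = Phi n d I ∘ ⇑(iotaL d) := rfl

lemma psi_apply (n d : ℕ) (I : EndE n) (z : Fin d → ℂ) (ℓ : Fin d) :
    Psi n d I z ℓ = (z ℓ).re • (1 : EndE n) + (z ℓ).im • I := rfl

/-- In a nontrivial dimension, `id` and a complex structure `I` are linearly independent. -/
lemma coeffs_eq_zero {n : ℕ} (hn : 1 ≤ n) {I : EndE n} (hI : I * I = -1) {a b : ℝ}
    (h : a • (1 : EndE n) + b • I = 0) : a = 0 ∧ b = 0 := by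
  haveI : Nonempty (Fin (2*n)) := ⟨⟨0, by omega⟩⟩
  obtain ⟨v, w, hvw⟩ := exists_pair_ne (V n)
  have hv : v - w ≠ 0 := sub_ne_zero.mpr hvw
  set x := v - w with hx
  have h1 : a • x + b • I x = 0 := by
    have := congrArg (fun T => T x) h
    simpa using this
  have h2 : a • I x - b • x = 0 := by
    have := congrArg (fun T => T (I x)) h
    have hIIx : I (I x) = -x := by
      have := congrArg (fun T => T x) hI
      simpa [ContinuousLinearMap.mul_apply] using this
    simp only [ContinuousLinearMap.add_apply, ContinuousLinearMap.coe_smul',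
      Pi.smul_apply, ContinuousLinearMap.one_apply, ContinuousLinearMap.zero_apply] at this
    rw [hIIx] at this
    rw [← this]; module
  have h3 : (a^2 + b^2) • x = a • (a • x + b • I x) - b • (a • I x - b • x) := by module
  rw [h1, h2, smul_zero, smul_zero, sub_zero] at h3
  rcases smul_eq_zero.mp h3 with h' | h'
  · constructor <;> nlinarith
  · exact absurd h' hv

lemma psi_injective {n d : ℕ} (hn : 1 ≤ n) {I : EndE n} (hI : I * I = -1) :
    Function.Injective (Psi n d I) := by
  intro z z' h
  funext ℓ
  have hℓ := congrArg (fun q => q ℓ) h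
  simp only [psi_apply] at hℓ
  have h0 : ((z ℓ).re - (z' ℓ).re) • (1 : EndE n) + ((z ℓ).im - (z' ℓ).im) • I =
      ((z ℓ).re • (1 : EndE n) + (z ℓ).im • I) - ((z' ℓ).re • (1 : EndE n) + (z' ℓ).im • I) := by
    module
  rw [hℓ, sub_self] at h0
  have : ((z ℓ).re - (z' ℓ).re) • (1 : EndE n) + ((z ℓ).im - (z' ℓ).im) • I = 0 := h0
  obtain ⟨h1, h2⟩ := coeffs_eq_zero hn hI this
  exact Complex.ext (by linarith) (by linarith)

lemma psi_range {n d : ℕ} (I : EndE n) : Set.range (Psi n d I) = CId n d I := by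
  ext q
  constructor
  · rintro ⟨z, rfl⟩ ℓ
    exact ⟨(z ℓ).re, (z ℓ).im, rfl⟩
  · intro hq
    refine ⟨fun ℓ => ⟨(hq ℓ).choose, (hq ℓ).choose_spec.choose⟩, ?_⟩
    funext ℓ
    exact ((hq ℓ).choose_spec.choose_spec).symm

/-- Transfer openness along the parametrization of a slice. -/
lemma isOpen_val_preimage {n d : ℕ} (hn : 1 ≤ n) {I : EndE n} (hI : I * I = -1)
    {S : Set (Fin d → EndE n)} (hS : IsOpen (Psi n d I ⁻¹' S)) :
    IsOpen ((Subtype.val : CId n d I → Fin d → EndE n) ⁻¹' S) := by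
  have hker : LinearMap.ker (Psi n d I).toLinearMap = ⊥ :=
    LinearMap.ker_eq_bot.mpr (psi_injective hn hI)
  have hemb : IsEmbedding (Psi n d I) :=
    (LinearMap.isClosedEmbedding_of_injective hker).isEmbedding
  let h1 : (Fin d → ℂ) ≃ₜ Set.range (Psi n d I) := hemb.toHomeomorph
  let h2 : (Fin d → ℂ) ≃ₜ CId n d I := h1.trans (Homeomorph.setCongr (psi_range I))
  have hpre : h2 ⁻¹' ((Subtype.val : CId n d I → Fin d → EndE n) ⁻¹' S) = Psi n d I ⁻¹' S := rfl
  rw [← Homeomorph.isOpen_preimage h2, hpre]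
  exact hS

lemma phi_preimage_open {n d : ℕ} {𝒞 : Set (EndE n)} {Ω : Set (Fin d → EndE n)}
    (hso : SliceOpen n d 𝒞 Ω) {I : EndE n} (hI𝒞 : I ∈ 𝒞) :
    IsOpen (Phi n d I ⁻¹' Ω) := by
  obtain ⟨U, hU, heq⟩ := hso.2 I hI𝒞
  have hmem : ∀ pt : (Fin d → ℝ) × (Fin d → ℝ), Phi n d I pt ∈ CId n d I :=
    fun pt ℓ => ⟨pt.1 ℓ, pt.2 ℓ, rfl⟩
  have hpre : Phi n d I ⁻¹' Ω = Phi n d I ⁻¹' U := by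
    ext pt
    constructor
    · intro h
      have : Phi n d I pt ∈ U ∩ CId n d I := heq ▸ ⟨h, hmem pt⟩
      exact this.1
    · intro h
      have : Phi n d I pt ∈ Ω ∩ CId n d I := heq.symm ▸ ⟨h, hmem pt⟩
      exact this.1
  rw [hpre]
  exact hU.preimage (PhiL n d I).continuous

/-- The two-form `J(x,y) = (-y,x)`. -/
def Jmap (d : ℕ) : ((Fin d → ℝ) × (Fin d → ℝ)) →L[ℝ] (Fin d → ℝ) × (Fin d → ℝ) :=
  (-(ContinuousLinearMap.snd ℝ _ _)).prod (ContinuousLinearMap.fst ℝ _ _)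

lemma iota_smul_I {d : ℕ} (z : Fin d → ℂ) : iotaL d (Complex.I • z) = Jmap d (iotaL d z) := by
  refine Prod.ext (funext fun ℓ => ?_) (funext fun ℓ => ?_) <;>
    simp [iotaL, Jmap, Complex.I_mul]

lemma comp_J {n d : ℕ} (I : EndE n) (A : ((Fin d → ℝ) × (Fin d → ℝ)) →L[ℝ] V n)
    (hCR : ∀ ℓ, A (ey d ℓ) = I (A (ex d ℓ)))
    (hII : ∀ v, I (I v) = -v) :
    I.comp A = A.comp (Jmap d) := by
  apply ContinuousLinearMap.coe_injective
  refine Module.Basis.ext ((Pi.basisFun ℝ (Fin d)).prod (Pi.basisFun ℝ (Fin d))) ?_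
  rintro (ℓ | ℓ)
  · show I (A _) = A (Jmap d _)
    have h1 : ((Pi.basisFun ℝ (Fin d)).prod (Pi.basisFun ℝ (Fin d))) (Sum.inl ℓ) = ex d ℓ := by
      simp [Module.Basis.prod_apply, ex, Pi.basisFun_apply]
    rw [h1]
    have h2 : Jmap d (ex d ℓ) = ey d ℓ := by simp [Jmap, ex, ey]
    rw [h2, hCR]
  · show I (A _) = A (Jmap d _)
    have h1 : ((Pi.basisFun ℝ (Fin d)).prod (Pi.basisFun ℝ (Fin d))) (Sum.inr ℓ) = ey d ℓ := by
      simp [Module.Basis.prod_apply, ey, Pi.basisFun_apply]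
    rw [h1]
    have h2 : Jmap d (ey d ℓ) = -ex d ℓ := by simp [Jmap, ex, ey]
    rw [h2, hCR, hII, map_neg]

/-- The scalarization `v ↦ ⟪u,v⟫ - i⟪u,Iv⟫`. -/
def phiCLM {n : ℕ} (u : V n) (I : EndE n) : V n →L[ℝ] ℂ :=
  Complex.ofRealCLM.comp ((innerSL ℝ) u) -
    Complex.I • (Complex.ofRealCLM.comp (((innerSL ℝ) u).comp I))

lemma phiCLM_re {n : ℕ} (u : V n) (I : EndE n) (v : V n) : (phiCLM u I v).re = ⟪u, v⟫ := by
  simp [phiCLM, smul_eq_mul]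

lemma phiCLM_I {n : ℕ} (u : V n) (I : EndE n) (hII : ∀ v, I (I v) = -v) (v : V n) :
    phiCLM u I (I v) = Complex.I * phiCLM u I v := by
  simp only [phiCLM, ContinuousLinearMap.sub_apply, ContinuousLinearMap.smul_apply,
    ContinuousLinearMap.comp_apply, Complex.ofRealCLM_apply, smul_eq_mul, hII, map_neg]
  ring_nf
  rw [Complex.I_sq]
  ring

/-- Upgrade a real-linear derivative commuting with `i` to a complex-linear one. -/
def toCLMC {d : ℕ} (D : (Fin d → ℂ) →L[ℝ] ℂ)
    (hD : ∀ w, D (Complex.I • w) = Complex.I * D w) : (Fin d → ℂ) →L[ℂ] ℂ where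
  toLinearMap :=
    { toFun := D
      map_add' := map_add D
      map_smul' := by
        intro c w
        have hw : c • w = (c.re : ℝ) • w + c.im • (Complex.I • w) := by
          funext ℓ
          simp only [Pi.smul_apply, Complex.real_smul, smul_eq_mul, Pi.add_apply]
          conv_lhs => rw [← Complex.re_add_im c]
          ring
        show D _ = _ • D w
        rw [hw, map_add, map_smul, map_smul, hD]
        simp only [Complex.real_smul, smul_eq_mul, RingHom.id_apply]
        conv_rhs => rw [← Complex.re_add_im c]
        ring }
  cont := D.cont

theorem diffAt_of_clinear {d : ℕ} {g : (Fin d → ℂ) → ℂ} {D : (Fin d → ℂ) →L[ℝ] ℂ}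
    {z : Fin d → ℂ} (h : HasFDerivAt g D z)
    (hD : ∀ w, D (Complex.I • w) = Complex.I * D w) : DifferentiableAt ℂ g z := by
  have : HasFDerivAt g (toCLMC D hD) z := by
    apply hasFDerivAt_of_restrictScalars ℝ h
    ext w
    rfl
  exact this.differentiableAt

/-- Key local statement: near a point of a slice where the max of the modulus is
attained with value `u` there, `f` is constantly `u` (in slice coordinates). -/
lemma key_local {n d : ℕ} (hn : 1 ≤ n) {I : EndE n} (hI : I * I = -1)
    {Ω : Set (Fin d → EndE n)} (hopen : IsOpen (Phi n d I ⁻¹' Ω))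
    {f : (Fin d → EndE n) → V n}
    (hdiff : DifferentiableOn ℝ (f ∘ Phi n d I) (Phi n d I ⁻¹' Ω))
    (hCR : ∀ p ∈ Phi n d I ⁻¹' Ω, ∀ ℓ, fderiv ℝ (f ∘ Phi n d I) p (ex d ℓ) +
      I (fderiv ℝ (f ∘ Phi n d I) p (ey d ℓ)) = 0)
    (u : V n) (hmaxu : ∀ q ∈ Ω, ‖f q‖ ≤ ‖u‖)
    {z₀ : Fin d → ℂ} (hz₀ : Psi n d I z₀ ∈ Ω) (hval : f (Psi n d I z₀) = u) :
    ∃ r > 0, ∀ z ∈ Metric.ball z₀ r, Psi n d I z ∈ Ω ∧ f (Psi n d I z) = u := by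
  have hII : ∀ v, I (I v) = -v := by
    intro v
    have := congrArg (fun T => T v) hI
    simpa [ContinuousLinearMap.mul_apply] using this
  have hO : IsOpen (Psi n d I ⁻¹' Ω) := hopen.preimage (iotaL d).continuous
  have hz₀O : z₀ ∈ Psi n d I ⁻¹' Ω := hz₀
  obtain ⟨r, hr, hball⟩ := Metric.isOpen_iff.mp hO z₀ hz₀O
  refine ⟨r, hr, ?_⟩
  set G : (Fin d → ℂ) → ℂ := fun z => phiCLM u I (f (Psi n d I z)) with hG
  have hGdiff : ∀ z ∈ Metric.ball z₀ r, DifferentiableAt ℂ G z := by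
    intro z hz
    have hmem : iotaL d z ∈ Phi n d I ⁻¹' Ω := hball hz
    have hFd : DifferentiableAt ℝ (f ∘ Phi n d I) (iotaL d z) :=
      hdiff.differentiableAt (hopen.mem_nhds hmem)
    set A := fderiv ℝ (f ∘ Phi n d I) (iotaL d z) with hA
    have hAe : ∀ ℓ, A (ey d ℓ) = I (A (ex d ℓ)) := by
      intro ℓ
      have h0 := hCR (iotaL d z) hmem ℓ
      have h1 : A (ex d ℓ) = -(I (A (ey d ℓ))) := by
        rw [eq_neg_iff_add_eq_zero]; exact h0
      rw [h1, map_neg, hII, neg_neg]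
    have hcomp : HasFDerivAt G ((phiCLM u I).comp (A.comp (iotaL d))) z := by
      have h1 : HasFDerivAt (fun w => (f ∘ Phi n d I) (iotaL d w)) (A.comp (iotaL d)) z :=
        (hFd.hasFDerivAt).comp z ((iotaL d).hasFDerivAt)
      exact ((phiCLM u I).hasFDerivAt).comp z h1
    apply diffAt_of_clinear hcomp
    intro w
    have hJ := comp_J I A hAe hII
    have hJw : A (Jmap d (iotaL d w)) = I (A (iotaL d w)) := by
      have := congrArg (fun T => T (iotaL d w)) hJ
      exact this.symm
    show phiCLM u I (A (iotaL d (Complex.I • w))) = Complex.I * phiCLM u I (A (iotaL d w))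
    rw [iota_smul_I, hJw, phiCLM_I u I hII]
  set H : (Fin d → ℂ) → ℂ := fun z => Complex.exp (G z) with hH
  have hHdiff : DifferentiableOn ℂ H (Metric.ball z₀ r) :=
    fun z hz => ((hGdiff z hz).cexp).differentiableWithinAt
  have hnormH : ∀ z, ‖H z‖ = Real.exp ((G z).re) := by
    intro z
    simp [hH, Complex.norm_exp]
  have hGre : ∀ z, (G z).re = ⟪u, f (Psi n d I z)⟫ := fun z => phiCLM_re u I _
  have hGz₀ : (G z₀).re = ‖u‖ ^ 2 := by
    rw [hGre, hval, real_inner_self_eq_norm_sq]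
  have hmaxH : IsMaxOn (norm ∘ H) (Metric.ball z₀ r) z₀ := by
    intro z hz
    have hqΩ : Psi n d I z ∈ Ω := hball hz
    have h1 : ⟪u, f (Psi n d I z)⟫ ≤ ‖u‖ ^ 2 := by
      have := real_inner_le_norm u (f (Psi n d I z))
      have h2 := hmaxu _ hqΩ
      nlinarith [norm_nonneg u]
    simp only [Set.mem_setOf_eq, Function.comp_apply]
    rw [hnormH, hnormH, hGz₀]
    exact Real.exp_le_exp.mpr ((hGre z).symm ▸ h1)
  have heq := Complex.norm_eqOn_of_isPreconnected_of_isMaxOn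
    (convex_ball z₀ r).isPreconnected Metric.isOpen_ball hHdiff
    (Metric.mem_ball_self hr) hmaxH
  intro z hz
  refine ⟨hball hz, ?_⟩
  have h1 : ‖H z‖ = ‖H z₀‖ := heq hz
  have h2 : (G z).re = (G z₀).re := by
    rw [hnormH, hnormH] at h1
    exact Real.exp_eq_exp.mp h1
  have hin : ⟪u, f (Psi n d I z)⟫ = ‖u‖ ^ 2 := by
    rw [← hGre, h2, hGz₀]
  have hle : ‖f (Psi n d I z)‖ ≤ ‖u‖ := hmaxu _ (hball hz)
  have hsub : ‖f (Psi n d I z) - u‖ ^ 2 ≤ 0 := by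
    rw [norm_sub_sq_real, real_inner_comm, hin]
    nlinarith [norm_nonneg (f (Psi n d I z)), norm_nonneg u]
  have hz0 : f (Psi n d I z) - u = 0 := by
    have h3 : ‖f (Psi n d I z) - u‖ = 0 := by
      nlinarith [norm_nonneg (f (Psi n d I z) - u)]
    exact norm_eq_zero.mp h3
  exact sub_eq_zero.mp hz0

set_option maxHeartbeats 1000000 in
/-- (Maximum Modulus Principle) A weak slice regular function on a slice-domain whose
Euclidean norm attains its maximum at a point of the domain is constant. -/
theorem maximum_modulus_principle (n d : ℕ) (hn : 1 ≤ n) (hd : 1 ≤ d)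
    (𝒞 : Set (EndE n)) (h𝒞 : 𝒞.Nonempty) (hsym : ∀ I ∈ 𝒞, -I ∈ 𝒞) (hcs : 𝒞 ⊆ CS n)
    (Ω : Set (Fin d → EndE n)) (hΩ : SliceDomain n d 𝒞 Ω)
    (f : (Fin d → EndE n) → V n) (hf : WSRegular n d 𝒞 Ω f)
    (p : Fin d → EndE n) (hp : p ∈ Ω)
    (hmax : ∀ q ∈ Ω, ‖f q‖ ≤ ‖f p‖) :
    ∀ q ∈ Ω, f q = f p := by
  set u := f p with hu
  set E : Set (Fin d → EndE n) := {q | q ∈ Ω ∧ f q = u} with hE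
  have hEopen_pre : ∀ I ∈ 𝒞, IsOpen (Psi n d I ⁻¹' E) := by
    intro I hI𝒞
    have hI : I * I = -1 := hcs hI𝒞
    rw [Metric.isOpen_iff]
    intro z hz
    obtain ⟨hzΩ, hzv⟩ := hz
    obtain ⟨r, hr, hb⟩ := key_local hn hI (phi_preimage_open hΩ.1 hI𝒞) (hf I hI𝒞).1
      (hf I hI𝒞).2 u hmax hzΩ hzv
    exact ⟨r, hr, fun z' hz' => ⟨(hb z' hz').1, (hb z' hz').2⟩⟩
  have hCopen_pre : ∀ I ∈ 𝒞, IsOpen (Psi n d I ⁻¹' (Ω \ E)) := by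
    intro I hI𝒞
    have hOopen : IsOpen (Psi n d I ⁻¹' Ω) :=
      (phi_preimage_open hΩ.1 hI𝒞).preimage (iotaL d).continuous
    have hcont : ContinuousOn (f ∘ Psi n d I) (Psi n d I ⁻¹' Ω) := by
      have h1 : ContinuousOn (f ∘ Phi n d I) (Phi n d I ⁻¹' Ω) := (hf I hI𝒞).1.continuousOn
      rw [psi_eq]
      exact h1.comp ((iotaL d).continuous.continuousOn) (fun z hz => hz)
    have hset : Psi n d I ⁻¹' (Ω \ E) = (Psi n d I ⁻¹' Ω) ∩ ((f ∘ Psi n d I) ⁻¹' ({u}ᶜ)) := by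
      ext z
      simp only [Set.mem_preimage, Set.mem_diff, hE, Set.mem_setOf_eq, Set.mem_inter_iff,
        Function.comp_apply, Set.mem_compl_iff, Set.mem_singleton_iff]
      tauto
    rw [hset]
    exact hcont.isOpen_inter_preimage hOopen isOpen_compl_singleton
  have htrans : ∀ S : Set (Fin d → EndE n), (∀ I ∈ 𝒞, IsOpen (Psi n d I ⁻¹' S)) →
      IsOpen[sliceTop n d 𝒞] S := by
    intro S hS
    unfold sliceTop
    rw [isOpen_iSup_iff]
    intro I
    rw [isOpen_iSup_iff]
    intro hI𝒞
    rw [isOpen_coinduced]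
    exact isOpen_val_preimage hn (hcs hI𝒞) (hS I hI𝒞)
  have hopenE : IsOpen[sliceTop n d 𝒞] E := htrans E hEopen_pre
  have hopenC : IsOpen[sliceTop n d 𝒞] (Ω \ E) := htrans _ hCopen_pre
  intro q hq
  by_contra hne
  have hpc : @IsPreconnected _ (sliceTop n d 𝒞) Ω := hΩ.2.2
  have hsub : Ω ⊆ E ∪ (Ω \ E) := by
    intro x hx
    by_cases h : f x = u
    · exact Or.inl ⟨hx, h⟩
    · exact Or.inr ⟨hx, fun hmem => h hmem.2⟩
  have h1 : (Ω ∩ E).Nonempty := ⟨p, hp, hp, rfl⟩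
  have h2 : (Ω ∩ (Ω \ E)).Nonempty := ⟨q, hq, hq, fun hmem => hne hmem.2⟩
  obtain ⟨x, hxΩ, hxE, hxC⟩ := hpc E (Ω \ E) hopenE hopenC hsub h1 h2
  exact hxC.2 hxE
end
end
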